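/- arXiv:1612.03793 — 5 statements merged into one kernel-verified Lean document; each statement's English description precedes it below -/
import Mathlib

section
/- Let S_k, k = 1, 2, ..., be the Sylvester matrices of a polynomial matrix M(λ) ∈ F[λ]^{m×(m+n)} of degree at most d. If S_k has full row rank (k+d)m for some index k ≥ 1, then for every index ℓ > k the Sylvester matrix S_ℓ also has full row rank (ℓ+d)m. -/
open Polynomial Matrix

noncomputable section

variable {F : Type*} [Field F]

/-- The rows of a polynomial matrix, viewed as vectors of rational functions. -/
def ratRow {p q : ℕ} (M : Matrix (Fin p) (Fin q) F[X]) (i : Fin p) :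
    Fin q → RatFunc F :=
  fun j => algebraMap F[X] (RatFunc F) (M i j)

/-- The rational vector subspace spanned by the rows of a polynomial matrix. -/
def rowSpan {p q : ℕ} (M : Matrix (Fin p) (Fin q) F[X]) :
    Submodule (RatFunc F) (Fin q → RatFunc F) :=
  Submodule.span (RatFunc F) (Set.range (ratRow M))

/-- The degree of the `i`-th row of a polynomial matrix. -/
def rowDeg {p q : ℕ} (M : Matrix (Fin p) (Fin q) F[X]) (i : Fin p) : ℕ :=
  Finset.univ.sup fun j => (M i j).natDegree

/-- The rows of `M` form a polynomial basis of the rational subspace `V` whose sum of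
row degrees is minimal among all polynomial bases of `V`. -/
def IsMinimalBasisOf {p q : ℕ} (V : Submodule (RatFunc F) (Fin q → RatFunc F))
    (M : Matrix (Fin p) (Fin q) F[X]) : Prop :=
  LinearIndependent (RatFunc F) (ratRow M) ∧ rowSpan M = V ∧
    ∀ M' : Matrix (Fin p) (Fin q) F[X],
      LinearIndependent (RatFunc F) (ratRow M') → rowSpan M' = V →
        ∑ i, rowDeg M i ≤ ∑ i, rowDeg M' i

/-- A polynomial matrix is a minimal basis if its rows form a minimal basis of the
rational subspace they span. -/
def IsMinimalBasis {p q : ℕ} (M : Matrix (Fin p) (Fin q) F[X]) : Prop :=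
  IsMinimalBasisOf (rowSpan M) M

/-- A polynomial matrix viewed as a matrix of rational functions. -/
def ratMat {p q : ℕ} (M : Matrix (Fin p) (Fin q) F[X]) :
    Matrix (Fin p) (Fin q) (RatFunc F) :=
  M.map (algebraMap F[X] (RatFunc F))

/-- The right null-space over `F(λ)` of a polynomial matrix. -/
def rightNullSpace {p q : ℕ} (M : Matrix (Fin p) (Fin q) F[X]) :
    Submodule (RatFunc F) (Fin q → RatFunc F) :=
  LinearMap.ker (Matrix.mulVecLin (ratMat M))

/-- The `k`-th Sylvester matrix of a polynomial matrix regarded as having degree at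
most `e`: the block-Toeplitz matrix with `k` block columns whose `j`-th block column
carries the coefficients `M_0, …, M_e` in block rows `j, …, j+e` and zeros elsewhere. -/
def sylv {p q : ℕ} (e k : ℕ) (M : Matrix (Fin p) (Fin q) F[X]) :
    Matrix (Fin (k + e) × Fin p) (Fin k × Fin q) F :=
  fun r c =>
    if (c.1 : ℕ) ≤ (r.1 : ℕ) ∧ (r.1 : ℕ) ≤ (c.1 : ℕ) + e then
      (M r.2 c.2).coeff ((r.1 : ℕ) - (c.1 : ℕ))
    else 0

/-- `M`, regarded as a polynomial matrix of degree at most `e`, has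
full-Sylvester-rank if every Sylvester matrix `S_k`, `k ≥ 1`, has full rank. -/
def HasFullSylvesterRank {p q : ℕ} (e : ℕ) (M : Matrix (Fin p) (Fin q) F[X]) : Prop :=
  ∀ k : ℕ, 1 ≤ k → (sylv e k M).rank = min ((k + e) * p) (k * q)

/-- The `k`-th coefficient matrix of a polynomial matrix. -/
def coeffMat {p q : ℕ} (k : ℕ) (M : Matrix (Fin p) (Fin q) F[X]) :
    Matrix (Fin p) (Fin q) F :=
  fun i j => (M i j).coeff k

/-- The highest-row-degree coefficient matrix: its `i`-th row is the coefficient of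
`λ^{d_i}` in the `i`-th row of `M`, where `d_i` is the `i`-th row degree. -/
def highRowMat {p q : ℕ} (M : Matrix (Fin p) (Fin q) F[X]) :
    Matrix (Fin p) (Fin q) F :=
  fun i j => (M i j).coeff (rowDeg M i)

/-- The `e`-reversal of a polynomial matrix: `rev_e P(λ) = λ^e P(1/λ)`. -/
def revMat {p q : ℕ} (e : ℕ) (P : Matrix (Fin p) (Fin q) F[X]) :
    Matrix (Fin p) (Fin q) F[X] :=
  fun i j => (P i j).reflect e



section Aux

variable {F : Type*} [Field F]

lemma li_of_rank_aux {a b : ℕ} {ι : Type*} [Fintype ι] (A : Matrix (Fin a × Fin b) ι F)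
    (h : A.rank = a * b) : LinearIndependent F (fun r => A r) := by
  show LinearIndependent F A.row
  rw [linearIndependent_iff_card_eq_finrank_span]
  rw [Set.finrank, ← Matrix.rank_eq_finrank_span_row, h, Fintype.card_prod,
    Fintype.card_fin, Fintype.card_fin]

lemma rank_of_li_aux {a b : ℕ} {ι : Type*} [Fintype ι] (A : Matrix (Fin a × Fin b) ι F)
    (h : LinearIndependent F (fun r => A r)) : A.rank = a * b := by
  rw [h.rank_matrix, Fintype.card_prod, Fintype.card_fin, Fintype.card_fin]

lemma li_iff_ker_aux {ι κ : Type*} [Fintype ι] [Fintype κ] [DecidableEq ι]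
    (A : Matrix ι κ F) :
    LinearIndependent F (fun r => A r) ↔ ∀ u, Matrix.vecMul u A = 0 → u = 0 := by
  show LinearIndependent F A.row ↔ _
  rw [← Matrix.vecMul_injective_iff]
  constructor
  · intro h u hu
    exact h (by simpa [Matrix.zero_vecMul] using hu)
  · intro h x y hxy
    have hxy' : Matrix.vecMul x A = Matrix.vecMul y A := hxy
    have := h (x - y) (by rw [Matrix.sub_vecMul, hxy', sub_self])
    exact sub_eq_zero.mp this

lemma fin_sum_shift {M : Type*} [AddCommMonoid M] {N n : ℕ} (h : N = n + 1) (f : Fin N → M) :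
    ∑ t, f t = f ⟨0, by omega⟩ + ∑ t : Fin n, f ⟨(t : ℕ) + 1, by omega⟩ := by
  subst h
  rw [Fin.sum_univ_succ]
  exact congrArg₂ (· + ·) (congrArg f (Fin.ext (by simp)))
    (Finset.sum_congr rfl fun t _ => congrArg f (Fin.ext (by simp)))

lemma vecMul_sylv_apply {p q e k : ℕ} (M : Matrix (Fin p) (Fin q) F[X])
    (u : Fin (k + e) × Fin p → F) (c : Fin k × Fin q) :
    Matrix.vecMul u (sylv e k M) c
      = ∑ t : Fin (k + e), ∑ i : Fin p, u (t, i) * sylv e k M (t, i) c := by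
  simp [Matrix.vecMul, dotProduct, Fintype.sum_prod_type]

lemma sylv_step_aux {m n d k : ℕ} (hkd : 0 < k + d)
    (M : Matrix (Fin m) (Fin (m + n)) F[X])
    (hind : ∀ u : Fin (k + d) × Fin m → F, Matrix.vecMul u (sylv d k M) = 0 → u = 0)
    (u : Fin (k + 1 + d) × Fin m → F)
    (hu : Matrix.vecMul u (sylv d (k + 1) M) = 0) : u = 0 := by
  classical
  have key : ∀ c : Fin (k + 1) × Fin (m + n),
      ∑ t : Fin (k + 1 + d), ∑ i : Fin m, u (t, i) * sylv d (k + 1) M (t, i) c = 0 := by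
    intro c
    rw [← vecMul_sylv_apply, hu]
    rfl
  -- Step 1: the shifted part of u is zero
  have hv : (fun p : Fin (k + d) × Fin m => u (⟨(p.1 : ℕ) + 1, by omega⟩, p.2)) = 0 := by
    apply hind
    funext c
    obtain ⟨s, j⟩ := c
    have h0 := key (⟨(s : ℕ) + 1, by omega⟩, j)
    rw [fin_sum_shift (show k + 1 + d = (k + d) + 1 by omega)] at h0
    have hzero : ∀ i : Fin m,
        u (⟨0, by omega⟩, i) * sylv d (k + 1) M (⟨0, by omega⟩, i) (⟨(s : ℕ) + 1, by omega⟩, j)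
          = 0 := by
      intro i
      have : sylv d (k + 1) M (⟨0, by omega⟩, i) (⟨(s : ℕ) + 1, by omega⟩, j) = 0 := by
        simp only [sylv]
        rw [if_neg]
        omega
      rw [this, mul_zero]
    rw [Finset.sum_eq_zero fun i _ => hzero i] at h0
    have hshift : ∀ (t : Fin (k + d)) (i : Fin m),
        sylv d (k + 1) M (⟨(t : ℕ) + 1, by omega⟩, i) (⟨(s : ℕ) + 1, by omega⟩, j)
          = sylv d k M (t, i) (s, j) := by
      intro t i
      simp only [sylv]
      rw [show (t : ℕ) + 1 - ((s : ℕ) + 1) = (t : ℕ) - (s : ℕ) from by omega]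
      exact if_congr (by omega) rfl rfl
    simp only [hshift] at h0
    rw [zero_add] at h0
    rw [vecMul_sylv_apply]
    simpa using h0
  have hv' : ∀ (t : Fin (k + 1 + d)) (i : Fin m), (t : ℕ) ≠ 0 → u (t, i) = 0 := by
    intro t i ht
    have := congrFun hv (⟨(t : ℕ) - 1, by omega⟩, i)
    simpa [show (t : ℕ) - 1 + 1 = (t : ℕ) from by omega] using this
  -- Step 2: the zeroth part of u is zero
  have hw : (fun p : Fin (k + d) × Fin m =>
      if p.1 = (⟨0, by omega⟩ : Fin (k + d)) then u (⟨0, by omega⟩, p.2) else 0) = 0 := by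
    apply hind
    funext c
    obtain ⟨s, j⟩ := c
    have h0 := key (⟨(s : ℕ), by omega⟩, j)
    have hred : ∀ t : Fin (k + 1 + d),
        ∑ i : Fin m, u (t, i) * sylv d (k + 1) M (t, i) (⟨(s : ℕ), by omega⟩, j)
          = if t = (⟨0, by omega⟩ : Fin (k + 1 + d)) then
              ∑ i : Fin m, u (⟨0, by omega⟩, i)
                * sylv d (k + 1) M (⟨0, by omega⟩, i) (⟨(s : ℕ), by omega⟩, j)
            else 0 := by
      intro t
      by_cases ht : t = (⟨0, by omega⟩ : Fin (k + 1 + d))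
      · rw [if_pos ht, ht]
      · rw [if_neg ht]
        refine Finset.sum_eq_zero fun i _ => ?_
        rw [hv' t i (fun h => ht (Fin.ext h)), zero_mul]
    rw [Finset.sum_congr rfl (fun t _ => hred t), Finset.sum_ite_eq' Finset.univ,
      if_pos (Finset.mem_univ _)] at h0
    simp only [Pi.zero_apply]
    rw [vecMul_sylv_apply]
    rw [fin_sum_shift (show k + d = (k + d - 1) + 1 by omega)]
    have h1 : ∀ t : Fin (k + d - 1),
        ∑ i : Fin m, (if (⟨(t : ℕ) + 1, by omega⟩ : Fin (k + d)) = ⟨0, by omega⟩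
            then u (⟨0, by omega⟩, i) else 0)
          * sylv d k M (⟨(t : ℕ) + 1, by omega⟩, i) (s, j) = 0 :=
      fun t => Finset.sum_eq_zero fun i _ => by
        rw [if_neg (by simp [Fin.ext_iff]), zero_mul]
    rw [Finset.sum_eq_zero fun t _ => h1 t, add_zero]
    have h2 : ∀ i : Fin m,
        (if (⟨0, by omega⟩ : Fin (k + d)) = ⟨0, by omega⟩ then u (⟨0, by omega⟩, i) else 0)
          * sylv d k M ((⟨0, by omega⟩ : Fin (k + d)), i) (s, j)
        = u (⟨0, by omega⟩, i)
            * sylv d (k + 1) M (⟨0, by omega⟩, i) (⟨(s : ℕ), by omega⟩, j) := by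
      intro i
      rw [if_pos rfl]
      congr 1
    rw [Finset.sum_congr rfl fun i _ => h2 i]
    exact h0
  -- Combine
  funext p
  obtain ⟨t, i⟩ := p
  by_cases ht : (t : ℕ) = 0
  · have h3 : t = ⟨0, by omega⟩ := Fin.ext ht
    rw [h3]
    have := congrFun hw ((⟨0, by omega⟩ : Fin (k + d)), i)
    simpa using this
  · exact hv' t i ht

end Aux

/-- If a Sylvester matrix `S_k` of `M(λ)` has full row rank `(k+d)m`, then every
Sylvester matrix `S_ℓ` with `ℓ > k` also has full row rank `(ℓ+d)m`. -/
theorem sylvester_full_row_rank_of_le {F : Type*} [Field F] {m n d : ℕ}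
    (hm : 0 < m) (hn : 0 < n) (hd : 0 < d)
    (M : Matrix (Fin m) (Fin (m + n)) F[X]) (hdeg : ∀ i j, (M i j).natDegree ≤ d)
    (k : ℕ) (hk : 1 ≤ k) (hfull : (sylv d k M).rank = (k + d) * m) :
    ∀ ℓ : ℕ, k < ℓ → (sylv d ℓ M).rank = (ℓ + d) * m := by
  
  -- reduce to kernel statements
  classical
  have H : ∀ j : ℕ, ∀ u : Fin (k + j + d) × Fin m → F,
      Matrix.vecMul u (sylv d (k + j) M) = 0 → u = 0 := by
    intro j
    induction j with
    | zero =>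
      exact (li_iff_ker_aux (sylv d (k + 0) M)).mp (li_of_rank_aux _ hfull)
    | succ j ih =>
      exact sylv_step_aux (by omega) M ih
  intro ℓ hℓ
  obtain ⟨j, rfl⟩ : ∃ j, ℓ = k + j := ⟨ℓ - k, by omega⟩
  exact rank_of_li_aux _ ((li_iff_ker_aux (sylv d (k + j) M)).mpr (H j))

end
end

section
/- Let M(λ) ∈ F[λ]^{m×(m+n)} be a polynomial matrix of degree at most d with full row normal rank m, let S_k be its Sylvester matrices with ranks r_k and right nullities n_k = k(m+n) − r_k, let ε_1, …, ε_n be the right minimal indices of M(λ), and let d' be the maximum right minimal index of M(λ). Then ε_1 + ⋯ + ε_n = n·d' − n_{d'} = r_{d'} − m·d'. -/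
open Polynomial Matrix

set_option maxHeartbeats 1000000
set_option synthInstance.maxHeartbeats 400000
set_option linter.unusedVariables false

noncomputable section

variable {F : Type*} [Field F]

-- ===================== auxiliary lemmas =====================

lemma am_inj : Function.Injective (algebraMap F[X] (RatFunc F)) :=
  IsFractionRing.injective _ _

lemma am_ne_zero {f : F[X]} (hf : f ≠ 0) : algebraMap F[X] (RatFunc F) f ≠ 0 := by
  intro h
  exact hf (am_inj (by rw [h, map_zero]))

lemma natDegree_le_rowDeg {p q : ℕ} (N : Matrix (Fin p) (Fin q) F[X]) (i : Fin p) (j : Fin q) :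
    (N i j).natDegree ≤ rowDeg N i := by
  unfold rowDeg; exact Finset.le_sup (f := fun j => (N i j).natDegree) (Finset.mem_univ j)

/-- Exchange lemma: replacing a row of a minimal basis by a vector in the rational
row span with a nonzero coefficient on that row and strictly smaller degree is absurd. -/
theorem exchange {p q : ℕ} {V : Submodule (RatFunc F) (Fin q → RatFunc F)}
    {N : Matrix (Fin p) (Fin q) F[X]} (hN : IsMinimalBasisOf V N)
    (i0 : Fin p) (y : Fin q → F[X]) (c : Fin p → RatFunc F) (hc : c i0 ≠ 0)
    (hy : ∀ j, algebraMap F[X] (RatFunc F) (y j) = ∑ i, c i * ratRow N i j)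
    (hdeg : (Finset.univ.sup fun j => (y j).natDegree) < rowDeg N i0) : False := by
  classical
  set N' : Matrix (Fin p) (Fin q) F[X] := Matrix.updateRow N i0 y with hN'
  have hrow : ∀ i, ratRow N' i = if i = i0 then (fun j => algebraMap F[X] (RatFunc F) (y j))
      else ratRow N i := by
    intro i
    by_cases h : i = i0
    · subst h; funext j; simp [ratRow, hN', Matrix.updateRow_self]
    · funext j; simp [ratRow, hN', Matrix.updateRow_ne h, h]
  have hyv : (fun j => algebraMap F[X] (RatFunc F) (y j)) = ∑ i, c i • ratRow N i := by
    funext j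
    rw [hy j, Finset.sum_apply]
    rfl
  have hsum_split : ∀ (g : Fin p → RatFunc F),
      ∑ i, g i • ratRow N' i
        = g i0 • (fun j => algebraMap F[X] (RatFunc F) (y j))
          + ∑ i ∈ Finset.univ.erase i0, g i • ratRow N i := by
    intro g
    rw [← Finset.add_sum_erase _ _ (Finset.mem_univ i0)]
    congr 1
    · rw [hrow i0, if_pos rfl]
    · exact Finset.sum_congr rfl fun i hi => by
        rw [hrow i, if_neg (Finset.ne_of_mem_erase hi)]
  have hind : LinearIndependent (RatFunc F) (ratRow N') := by
    rw [Fintype.linearIndependent_iff]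
    intro g hg
    have key : ∑ i, (g i0 * c i + if i = i0 then 0 else g i) • ratRow N i = 0 := by
      have e1 : ∑ i, (g i0 * c i + if i = i0 then 0 else g i) • ratRow N i
          = ∑ i, (g i0 * c i) • ratRow N i
            + ∑ i, (if i = i0 then 0 else g i) • ratRow N i := by
        rw [← Finset.sum_add_distrib]
        exact Finset.sum_congr rfl fun i _ => add_smul _ _ _
      have e2 : ∑ i, (g i0 * c i) • ratRow N i
          = g i0 • (fun j => algebraMap F[X] (RatFunc F) (y j)) := by
        rw [hyv, Finset.smul_sum]
        exact Finset.sum_congr rfl fun i _ => (smul_smul _ _ _).symm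
      have e3 : ∑ i, (if i = i0 then 0 else g i) • ratRow N i
          = ∑ i ∈ Finset.univ.erase i0, g i • ratRow N i := by
        rw [← Finset.add_sum_erase _ (fun i => (if i = i0 then 0 else g i) • ratRow N i)
          (Finset.mem_univ i0)]
        rw [if_pos rfl, zero_smul, zero_add]
        exact Finset.sum_congr rfl fun i hi => by rw [if_neg (Finset.ne_of_mem_erase hi)]
      rw [e1, e2, e3, ← hsum_split g, hg]
    have hz := Fintype.linearIndependent_iff.mp hN.1 _ key
    have hgi0 : g i0 = 0 := by
      have h0 := hz i0
      simp only [if_pos rfl, if_true, add_zero] at h0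
      exact (mul_eq_zero.mp h0).resolve_right hc
    intro i
    by_cases h : i = i0
    · rw [h]; exact hgi0
    · have := hz i
      rw [if_neg h, hgi0, zero_mul, zero_add] at this
      exact this
  have hspan : rowSpan N' = rowSpan N := by
    unfold rowSpan
    apply le_antisymm
    · rw [Submodule.span_le]
      rintro _ ⟨i, rfl⟩
      rw [hrow i]
      split_ifs with h
      · rw [hyv]
        exact Submodule.sum_mem _ fun i _ =>
          Submodule.smul_mem _ _ (Submodule.subset_span ⟨i, rfl⟩)
      · exact Submodule.subset_span ⟨i, rfl⟩
    · rw [Submodule.span_le]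
      rintro _ ⟨i, rfl⟩
      by_cases h : i = i0
      · rw [h]
        have he : ratRow N i0 = (c i0)⁻¹ • ((fun j => algebraMap F[X] (RatFunc F) (y j))
            - ∑ i ∈ Finset.univ.erase i0, c i • ratRow N i) := by
          rw [hyv, ← Finset.add_sum_erase _ _ (Finset.mem_univ i0), add_sub_cancel_right,
            smul_smul, inv_mul_cancel₀ hc, one_smul]
        rw [he]
        apply Submodule.smul_mem
        apply Submodule.sub_mem
        · have h2 : (fun j => algebraMap F[X] (RatFunc F) (y j)) = ratRow N' i0 := by
            rw [hrow i0, if_pos rfl]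
          rw [h2]
          exact Submodule.subset_span ⟨i0, rfl⟩
        · refine Submodule.sum_mem _ fun i hi => Submodule.smul_mem _ _ ?_
          have h2 : ratRow N i = ratRow N' i := by
            rw [hrow i, if_neg (Finset.ne_of_mem_erase hi)]
          rw [h2]
          exact Submodule.subset_span ⟨i, rfl⟩
      · have h2 : ratRow N i = ratRow N' i := by rw [hrow i, if_neg h]
        rw [h2]
        exact Submodule.subset_span ⟨i, rfl⟩
  have hdegsum : ∑ i, rowDeg N' i < ∑ i, rowDeg N i := by
    have hN'i0 : rowDeg N' i0 = Finset.univ.sup fun j => (y j).natDegree := by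
      unfold rowDeg
      congr 1
      funext j
      rw [show N' i0 j = y j from by simp [hN', Matrix.updateRow_self]]
    have hN'i : ∀ i, i ≠ i0 → rowDeg N' i = rowDeg N i := by
      intro i h
      unfold rowDeg
      congr 1
      funext j
      rw [show N' i j = N i j from by simp [hN', Matrix.updateRow_ne h]]
    apply Finset.sum_lt_sum
    · intro i _
      by_cases h : i = i0
      · subst h; rw [hN'i0]; exact le_of_lt hdeg
      · rw [hN'i i h]
    · exact ⟨i0, Finset.mem_univ _, by rw [hN'i0]; exact hdeg⟩
  exact absurd (hN.2.2 N' hind (hspan.trans hN.2.1)) (not_le.mpr hdegsum)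

/-- generic coefficient extraction from `∑ t, C (c t) * X^t` -/
lemma coeff_ofFn {K : ℕ} (c : Fin K → F) (s : ℕ) :
    (∑ t : Fin K, Polynomial.C (c t) * X ^ (t : ℕ)).coeff s
      = if h : s < K then c ⟨s, h⟩ else 0 := by
  rw [Polynomial.finset_sum_coeff]
  simp only [Polynomial.coeff_C_mul, Polynomial.coeff_X_pow]
  split
  next h =>
    rw [Finset.sum_eq_single (⟨s, h⟩ : Fin K)]
    · simp
    · intro t _ ht
      rw [if_neg, mul_zero]
      intro he
      exact ht (Fin.ext he.symm)
    · intro h'; exact absurd (Finset.mem_univ _) h'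
  next h =>
    apply Finset.sum_eq_zero
    intro t _
    rw [if_neg, mul_zero]
    intro he
    exact h (he ▸ t.isLt)

lemma ofFn_eq {K : ℕ} (f : F[X]) (hf : ∀ s, K ≤ s → f.coeff s = 0) :
    (∑ t : Fin K, Polynomial.C (f.coeff (t : ℕ)) * X ^ (t : ℕ)) = f := by
  ext s
  rw [coeff_ofFn]
  split
  next h => rfl
  next h => exact (hf s (not_lt.mp h)).symm

/-- For a minimal basis, the highest-row-degree coefficient rows are independent. -/
theorem highRow_li {p q : ℕ} {V : Submodule (RatFunc F) (Fin q → RatFunc F)}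
    {N : Matrix (Fin p) (Fin q) F[X]} (hN : IsMinimalBasisOf V N) :
    LinearIndependent F (fun i => highRowMat N i) := by
  classical
  rw [Fintype.linearIndependent_iff]
  intro g hg
  by_contra hcon
  push_neg at hcon
  obtain ⟨i1, hi1⟩ := hcon
  set S := Finset.univ.filter (fun i => g i ≠ 0) with hS
  have hSne : S.Nonempty := ⟨i1, by simp [hS, hi1]⟩
  obtain ⟨i0, hi0S, hi0⟩ := Finset.exists_mem_eq_sup S hSne (fun i => rowDeg N i)
  have hg0 : g i0 ≠ 0 := (Finset.mem_filter.mp hi0S).2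
  set e0 := rowDeg N i0 with he0
  have hle : ∀ i, g i ≠ 0 → rowDeg N i ≤ e0 := by
    intro i hi
    calc rowDeg N i ≤ S.sup fun i => rowDeg N i :=
          Finset.le_sup (f := fun i => rowDeg N i) (by simp [hS, hi])
    _ = e0 := hi0
  set y : Fin q → F[X] :=
    fun j => ∑ i, Polynomial.C (g i) * X ^ (e0 - rowDeg N i) * N i j with hy_def
  set c : Fin p → RatFunc F :=
    fun i => algebraMap F[X] (RatFunc F) (Polynomial.C (g i) * X ^ (e0 - rowDeg N i)) with hc_def
  have hc0 : c i0 ≠ 0 := by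
    rw [hc_def]
    apply am_ne_zero
    simp only [he0, Nat.sub_self, pow_zero, mul_one]
    exact fun h => hg0 (by simpa using (Polynomial.C_eq_zero.mp h))
  have hy : ∀ j, algebraMap F[X] (RatFunc F) (y j) = ∑ i, c i * ratRow N i j := by
    intro j
    rw [hy_def]
    rw [map_sum]
    exact Finset.sum_congr rfl fun i _ => by rw [_root_.map_mul]; rfl
  have hterm : ∀ i j, (Polynomial.C (g i) * X ^ (e0 - rowDeg N i) * N i j).coeff e0
      = g i * (N i j).coeff (rowDeg N i) := by
    intro i j
    rcases eq_or_ne (g i) 0 with h | h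
    · simp [h]
    · have hrw : Polynomial.C (g i) * X ^ (e0 - rowDeg N i) * N i j
          = (Polynomial.C (g i) * N i j) * X ^ (e0 - rowDeg N i) := by ring
      rw [hrw, Polynomial.coeff_mul_X_pow', if_pos (Nat.sub_le _ _), Polynomial.coeff_C_mul]
      congr 2
      have := hle i h
      omega
  have hcoeff : ∀ j, (y j).coeff e0 = 0 := by
    intro j
    rw [hy_def]
    rw [Polynomial.finset_sum_coeff]
    have h2 : ∑ i, (Polynomial.C (g i) * X ^ (e0 - rowDeg N i) * N i j).coeff e0
        = ∑ i, g i * highRowMat N i j := by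
      exact Finset.sum_congr rfl fun i _ => hterm i j
    rw [h2]
    have h3 := congrFun hg j
    rw [Finset.sum_apply] at h3
    simpa using h3
  have hdegy : ∀ j, (y j).natDegree ≤ e0 := by
    intro j
    rw [hy_def]
    apply Polynomial.natDegree_sum_le_of_forall_le
    intro i _
    rcases eq_or_ne (g i) 0 with h | h
    · simp [h]
    · refine le_trans (Polynomial.natDegree_mul_le) ?_
      refine le_trans (Nat.add_le_add (Polynomial.natDegree_mul_le) (natDegree_le_rowDeg N i j)) ?_
      rw [Polynomial.natDegree_C, Polynomial.natDegree_X_pow]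
      have := hle i h
      omega
  by_cases hy0 : ∀ j, y j = 0
  · have hzero : ∑ i, c i • ratRow N i = 0 := by
      funext j
      rw [Finset.sum_apply]
      simp only [Pi.smul_apply, smul_eq_mul, Pi.zero_apply]
      rw [← hy j, hy0 j, map_zero]
    exact hc0 (Fintype.linearIndependent_iff.mp hN.1 c hzero i0)
  · push_neg at hy0
    obtain ⟨j1, hj1⟩ := hy0
    have he0pos : 0 < e0 := by
      rcases Nat.eq_zero_or_pos e0 with h | h
      · exfalso
        apply hj1
        have hd1 := hdegy j1
        rw [h] at hd1
        have := Polynomial.eq_C_of_natDegree_le_zero hd1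
        rw [this]
        have hc1 := hcoeff j1
        rw [h] at hc1
        rw [hc1, map_zero]
      · exact h
    have hlt : (Finset.univ.sup fun j => (y j).natDegree) < e0 := by
      rw [Finset.sup_lt_iff (show (⊥ : ℕ) < e0 from he0pos)]
      intro j _
      rcases eq_or_ne (y j) 0 with h | h
      · simpa [h] using he0pos
      · rcases lt_or_eq_of_le (hdegy j) with h2 | h2
        · exact h2
        · exfalso
          have h3 := hcoeff j
          rw [← h2] at h3
          exact h (Polynomial.leadingCoeff_eq_zero.mp h3)
    exact exchange hN i0 y c hc0 hy hlt

lemma coeff_combo {p q : ℕ} (N : Matrix (Fin p) (Fin q) F[X]) (pp : Fin p → F[X]) (A : ℕ)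
    (hA : ∀ i, pp i ≠ 0 → (pp i).natDegree + rowDeg N i ≤ A) (j : Fin q) :
    (∑ i, pp i * N i j).coeff A
      = ∑ i, (pp i).coeff (A - rowDeg N i) * highRowMat N i j := by
  rw [Polynomial.finset_sum_coeff]
  apply Finset.sum_congr rfl
  intro i _
  rcases eq_or_ne (pp i) 0 with h | h
  · simp [h]
  · have h1 := hA i h
    have hdn := natDegree_le_rowDeg N i j
    rw [Polynomial.coeff_mul]
    rw [Finset.sum_eq_single ((A - rowDeg N i, rowDeg N i) : ℕ × ℕ)]
    · rfl
    · intro x hx hne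
      rw [Finset.HasAntidiagonal.mem_antidiagonal] at hx
      rcases lt_trichotomy x.2 (rowDeg N i) with h2 | h2 | h2
      · have : (pp i).natDegree < x.1 := by omega
        rw [Polynomial.coeff_eq_zero_of_natDegree_lt this, zero_mul]
      · exfalso
        apply hne
        have hx1 : x.1 = A - rowDeg N i := by omega
        exact Prod.ext hx1 h2
      · have : (N i j).natDegree < x.2 := lt_of_le_of_lt hdn h2
        rw [Polynomial.coeff_eq_zero_of_natDegree_lt this, mul_zero]
    · intro hmem
      exfalso
      apply hmem
      rw [Finset.HasAntidiagonal.mem_antidiagonal]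
      omega

lemma exists_coeff_ne_zero {p q : ℕ} {V : Submodule (RatFunc F) (Fin q → RatFunc F)}
    {N : Matrix (Fin p) (Fin q) F[X]} (hN : IsMinimalBasisOf V N)
    (pp : Fin p → F[X]) (A : ℕ) (hA : ∀ i, pp i ≠ 0 → (pp i).natDegree + rowDeg N i ≤ A)
    (i0 : Fin p) (h0 : pp i0 ≠ 0) (hmax : (pp i0).natDegree + rowDeg N i0 = A) :
    ∃ j, (∑ i, pp i * N i j).coeff A ≠ 0 := by
  by_contra hcon
  push_neg at hcon
  have h1 : ∑ i, ((pp i).coeff (A - rowDeg N i)) • highRowMat N i = 0 := by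
    funext j
    rw [Finset.sum_apply, Pi.zero_apply]
    simp only [Pi.smul_apply, smul_eq_mul]
    rw [← coeff_combo N pp A hA j, hcon j]
  have hli := highRow_li hN
  rw [Fintype.linearIndependent_iff] at hli
  have h2 := hli (fun i => (pp i).coeff (A - rowDeg N i)) h1 i0
  apply h0
  have he : A - rowDeg N i0 = (pp i0).natDegree := by omega
  rw [he] at h2
  exact Polynomial.leadingCoeff_eq_zero.mp h2

theorem div_induction {p q : ℕ} {V : Submodule (RatFunc F) (Fin q → RatFunc F)}
    {N : Matrix (Fin p) (Fin q) F[X]} (hN : IsMinimalBasisOf V N) :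
    ∀ (k : ℕ) (Q : F[X]), Q ≠ 0 → Q.natDegree ≤ k → ∀ (x : Fin q → F[X]) (pp : Fin p → F[X]),
      (∀ j, Q * x j = ∑ i, pp i * N i j) →
        ∃ pp' : Fin p → F[X], ∀ j, x j = ∑ i, pp' i * N i j := by
  classical
  intro k
  induction k with
  | zero =>
    intro Q hQ0 hQk x pp hx
    obtain ⟨aq, haq⟩ : ∃ aq, Q = Polynomial.C aq := ⟨Q.coeff 0, Polynomial.eq_C_of_natDegree_le_zero hQk⟩
    subst haq
    have ha0 : aq ≠ 0 := fun h => hQ0 (by rw [h, map_zero])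
    refine ⟨fun i => Polynomial.C aq⁻¹ * pp i, fun j => ?_⟩
    have h1 : x j = Polynomial.C aq⁻¹ * (Polynomial.C aq * x j) := by
      rw [← mul_assoc, ← Polynomial.C_mul, inv_mul_cancel₀ ha0, Polynomial.C_1, one_mul]
    rw [h1, hx j, Finset.mul_sum]
    exact Finset.sum_congr rfl fun i _ => by ring
  | succ k ih =>
    intro Q hQ0 hQk x pp hx
    by_cases hdeg0 : Q.natDegree = 0
    · -- constant case again
      obtain ⟨aq, haq⟩ : ∃ aq, Q = Polynomial.C aq :=
        ⟨Q.coeff 0, Polynomial.eq_C_of_natDegree_le_zero (le_of_eq hdeg0)⟩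
      subst haq
      have ha0 : aq ≠ 0 := fun h => hQ0 (by rw [h, map_zero])
      refine ⟨fun i => Polynomial.C aq⁻¹ * pp i, fun j => ?_⟩
      have h1 : x j = Polynomial.C aq⁻¹ * (Polynomial.C aq * x j) := by
        rw [← mul_assoc, ← Polynomial.C_mul, inv_mul_cancel₀ ha0, Polynomial.C_1, one_mul]
      rw [h1, hx j, Finset.mul_sum]
      exact Finset.sum_congr rfl fun i _ => by ring
    · have hnu : ¬IsUnit Q := by
        intro h
        exact hdeg0 (Polynomial.natDegree_eq_zero_of_isUnit h)
      obtain ⟨r, hrm, hirr, hrdvd⟩ := Polynomial.exists_monic_irreducible_factor Q hnu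
      have hr0 : r ≠ 0 := hrm.ne_zero
      have hrdpos : 0 < r.natDegree := by
        rcases Nat.eq_zero_or_pos r.natDegree with h | h
        · exact absurd (by rw [hrm.natDegree_eq_zero.mp h]; exact isUnit_one)
            hirr.not_isUnit
        · exact h
      by_cases hall : ∀ i, r ∣ pp i
      · obtain ⟨Q', hQ'⟩ := hrdvd
        choose pp2 hpp2 using hall
        have hQ'0 : Q' ≠ 0 := by
          rintro rfl
          rw [mul_zero] at hQ'
          exact hQ0 hQ'
        have hQ'deg : Q'.natDegree ≤ k := by
          have h1 : Q.natDegree = r.natDegree + Q'.natDegree := by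
            rw [hQ', Polynomial.natDegree_mul hr0 hQ'0]
          omega
        apply ih Q' hQ'0 hQ'deg x (fun i => pp2 i)
        intro j
        apply mul_left_cancel₀ hr0
        rw [← mul_assoc, ← hQ', hx j, Finset.mul_sum]
        exact Finset.sum_congr rfl fun i _ => by rw [hpp2 i]; ring
      · push_neg at hall
        obtain ⟨istar, histar⟩ := hall
        exfalso
        set a : Fin p → F[X] := fun i => pp i %ₘ r with ha
        have hsum_dvd : ∀ j, r ∣ ∑ i, a i * N i j := by
          intro j
          have h1 : ∑ i, a i * N i j = Q * x j - r * ∑ i, (pp i /ₘ r) * N i j := by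
            rw [hx j, Finset.mul_sum, ← Finset.sum_sub_distrib]
            refine Finset.sum_congr rfl fun i _ => ?_
            have h2 := Polynomial.modByMonic_add_div (pp i) r
            have ha2 : a i = pp i - r * (pp i /ₘ r) := by
              rw [ha]
              dsimp only
              linear_combination h2
            rw [ha2]; ring
          rw [h1]
          refine dvd_sub (Dvd.dvd.mul_right hrdvd (x j)) ⟨_, rfl⟩
        have hastar : a istar ≠ 0 := by
          rw [ha]
          intro h
          exact histar ((Polynomial.modByMonic_eq_zero_iff_dvd hrm).mp h)
        set S := Finset.univ.filter (fun i => a i ≠ 0) with hS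
        have hSne : S.Nonempty := ⟨istar, by simp [hS, hastar]⟩
        obtain ⟨i0, hi0S, hi0⟩ := Finset.exists_mem_eq_sup S hSne
          (fun i => (a i).natDegree + rowDeg N i)
        have ha0 : a i0 ≠ 0 := (Finset.mem_filter.mp hi0S).2
        set A := S.sup (fun i => (a i).natDegree + rowDeg N i) with hA
        have hAle : ∀ i, a i ≠ 0 → (a i).natDegree + rowDeg N i ≤ A := by
          intro i hi
          exact Finset.le_sup (f := fun i => (a i).natDegree + rowDeg N i) (by simp [hS, hi])
        obtain ⟨j0, hj0⟩ := exists_coeff_ne_zero hN a A hAle i0 ha0 hi0.symm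
        choose u hu using hsum_dvd
        have hadeg : (a i0).natDegree < r.natDegree := by
          have h1 := Polynomial.degree_modByMonic_lt (pp i0) hrm
          exact Polynomial.natDegree_lt_natDegree ha0 h1
        have hsumdeg : ∀ j, (∑ i, a i * N i j).natDegree ≤ A := by
          intro j
          apply Polynomial.natDegree_sum_le_of_forall_le
          intro i _
          rcases eq_or_ne (a i) 0 with h | h
          · simp [h]
          · exact le_trans Polynomial.natDegree_mul_le
              (le_trans (Nat.add_le_add le_rfl (natDegree_le_rowDeg N i j)) (hAle i h))
        have hudeg : ∀ j, u j ≠ 0 → (u j).natDegree < rowDeg N i0 := by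
          intro j hj
          have h1 : (∑ i, a i * N i j).natDegree = r.natDegree + (u j).natDegree := by
            rw [hu j, Polynomial.natDegree_mul hr0 hj]
          have h2 := hsumdeg j
          have h3 : (a i0).natDegree + rowDeg N i0 = A := hi0.symm
          omega
        have hu0 : u j0 ≠ 0 := by
          intro h
          apply hj0
          rw [hu j0, h, mul_zero]
          simp
        have hpos : 0 < rowDeg N i0 := lt_of_le_of_lt (Nat.zero_le _) (hudeg j0 hu0)
        set c : Fin p → RatFunc F :=
          fun i => algebraMap F[X] (RatFunc F) (a i) / algebraMap F[X] (RatFunc F) r with hc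
        have hr0' : algebraMap F[X] (RatFunc F) r ≠ 0 := am_ne_zero hr0
        have hcy : ∀ j, algebraMap F[X] (RatFunc F) (u j) = ∑ i, c i * ratRow N i j := by
          intro j
          rw [eq_comm]
          have h1 : ∑ i, c i * ratRow N i j
              = (∑ i, algebraMap F[X] (RatFunc F) (a i) * ratRow N i j)
                  / algebraMap F[X] (RatFunc F) r := by
            rw [Finset.sum_div]
            exact Finset.sum_congr rfl fun i _ => by rw [hc]; ring
          rw [h1]
          have h2 : ∑ i, algebraMap F[X] (RatFunc F) (a i) * ratRow N i j
              = algebraMap F[X] (RatFunc F) (r * u j) := by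
            rw [← hu j, map_sum]
            exact Finset.sum_congr rfl fun i _ => by rw [_root_.map_mul]; rfl
          rw [h2, _root_.map_mul, mul_div_cancel_left₀ _ hr0']
        have hc0 : c i0 ≠ 0 := div_ne_zero (am_ne_zero ha0) hr0'
        have hlt : (Finset.univ.sup fun j => (u j).natDegree) < rowDeg N i0 := by
          rw [Finset.sup_lt_iff (show (⊥ : ℕ) < rowDeg N i0 from hpos)]
          intro j _
          rcases eq_or_ne (u j) 0 with h | h
          · simpa [h] using hpos
          · exact hudeg j h
        exact exchange hN i0 u c hc0 hcy hlt

theorem mem_rowSpan_poly {p q : ℕ} {V : Submodule (RatFunc F) (Fin q → RatFunc F)}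
    {N : Matrix (Fin p) (Fin q) F[X]} (hN : IsMinimalBasisOf V N)
    (x : Fin q → F[X]) (hx : (fun j => algebraMap F[X] (RatFunc F) (x j)) ∈ rowSpan N) :
    ∃ pp : Fin p → F[X], ∀ j, x j = ∑ i, pp i * N i j := by
  classical
  rw [rowSpan, Submodule.mem_span_range_iff_exists_fun] at hx
  obtain ⟨f, hf⟩ := hx
  set Q : F[X] := ∏ i, (f i).denom with hQ
  have hQ0 : Q ≠ 0 := Finset.prod_ne_zero_iff.mpr fun i _ => RatFunc.denom_ne_zero _
  have hpi : ∀ i, ∃ pi : F[X],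
      algebraMap F[X] (RatFunc F) pi = algebraMap F[X] (RatFunc F) Q * f i := by
    intro i
    obtain ⟨ci, hci⟩ := Finset.dvd_prod_of_mem (fun i => (f i).denom) (Finset.mem_univ i)
    refine ⟨(f i).num * ci, ?_⟩
    have hd0 : algebraMap F[X] (RatFunc F) (f i).denom ≠ 0 := am_ne_zero (RatFunc.denom_ne_zero _)
    have hnum := RatFunc.num_div_denom (f i)
    rw [div_eq_iff hd0] at hnum
    have hQeq : Q = (f i).denom * ci := hQ.trans hci
    rw [_root_.map_mul, hnum, hQeq, _root_.map_mul]
    ring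
  choose pp0 hpp0 using hpi
  have key : ∀ j, Q * x j = ∑ i, pp0 i * N i j := by
    intro j
    apply am_inj
    rw [_root_.map_mul, map_sum]
    have h2 := congrFun hf j
    rw [Finset.sum_apply] at h2
    simp only [Pi.smul_apply, smul_eq_mul] at h2
    calc algebraMap F[X] (RatFunc F) Q * algebraMap F[X] (RatFunc F) (x j)
        = algebraMap F[X] (RatFunc F) Q * ∑ i, f i * ratRow N i j := by rw [← h2]
      _ = ∑ i, algebraMap F[X] (RatFunc F) (pp0 i) * ratRow N i j := by
          rw [Finset.mul_sum]
          refine Finset.sum_congr rfl fun i _ => ?_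
          rw [hpp0 i]
          ring
      _ = ∑ i, algebraMap F[X] (RatFunc F) (pp0 i * N i j) := by
          exact Finset.sum_congr rfl fun i _ => by rw [_root_.map_mul]; rfl
  exact div_induction hN Q.natDegree Q hQ0 le_rfl x pp0 key

/-- The sum of the right minimal indices `ε_1, …, ε_n` of `M(λ)` equals
`n·d' - n_{d'} = r_{d'} - m·d'`, where `d'` is the maximum right minimal index. -/
theorem sum_rightMinimalIndices_eq {F : Type*} [Field F] {m n d : ℕ}
    (hm : 0 < m) (hn : 0 < n) (hd : 0 < d)
    (M : Matrix (Fin m) (Fin (m + n)) F[X]) (hdeg : ∀ i j, (M i j).natDegree ≤ d)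
    (hrk : (ratMat M).rank = m)
    (N : Matrix (Fin n) (Fin (m + n)) F[X])
    (hN : IsMinimalBasisOf (rightNullSpace M) N)
    (d' : ℕ) (hd' : Finset.univ.sup (fun i => rowDeg N i) = d') :
    ((∑ i, rowDeg N i : ℕ) : ℤ)
        = (n : ℤ) * d' - ((d' * (m + n) - (sylv d d' M).rank : ℕ) : ℤ) ∧
    ((∑ i, rowDeg N i : ℕ) : ℤ) = ((sylv d d' M).rank : ℤ) - (m : ℤ) * d' := by
  classical
  have hεle : ∀ i, rowDeg N i ≤ d' := by
    intro i
    rw [← hd']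
    exact Finset.le_sup (f := fun i => rowDeg N i) (Finset.mem_univ i)
  have hMN : ∀ (i : Fin n) (i' : Fin m), ∑ j, M i' j * N i j = 0 := by
    intro i i'
    have h1 : ratRow N i ∈ rightNullSpace M := by
      rw [← hN.2.1]
      exact Submodule.subset_span ⟨i, rfl⟩
    rw [rightNullSpace, LinearMap.mem_ker] at h1
    have h4 := congrFun h1 i'
    simp only [Matrix.mulVecLin_apply, Matrix.mulVec, dotProduct, ratMat,
      Matrix.map_apply, ratRow, Pi.zero_apply] at h4
    apply am_inj
    rw [map_zero, map_sum]
    rw [Finset.sum_congr rfl fun j _ =>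
      (_root_.map_mul (algebraMap F[X] (RatFunc F)) (M i' j) (N i j))]
    exact h4
  set P : (Fin d' × Fin (m + n) → F) → Fin (m + n) → F[X] :=
    fun x j => ∑ t : Fin d', Polynomial.C (x (t, j)) * X ^ (t : ℕ) with hP
  have coeffP : ∀ (x : Fin d' × Fin (m + n) → F) (j : Fin (m + n)) (s : ℕ),
      (P x j).coeff s = if h : s < d' then x (⟨s, h⟩, j) else 0 := by
    intro x j s
    rw [hP]
    exact coeff_ofFn (fun t => x (t, j)) s
  have hmv : ∀ (x : Fin d' × Fin (m + n) → F) (r : Fin (d' + d)) (i : Fin m),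
      ((sylv d d' M).mulVec x) (r, i) = (∑ j, M i j * P x j).coeff (r : ℕ) := by
    intro x r i
    rw [Polynomial.finset_sum_coeff]
    have hR : ∀ j, (M i j * P x j).coeff (r : ℕ)
        = ∑ t : Fin d',
            x (t, j) * (if (t : ℕ) ≤ (r : ℕ) then (M i j).coeff ((r : ℕ) - (t : ℕ)) else 0) := by
      intro j
      rw [hP]
      dsimp only
      rw [Finset.mul_sum, Polynomial.finset_sum_coeff]
      refine Finset.sum_congr rfl fun t _ => ?_
      rw [show M i j * (Polynomial.C (x (t, j)) * X ^ (t : ℕ))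
          = (Polynomial.C (x (t, j)) * M i j) * X ^ (t : ℕ) from by ring]
      rw [Polynomial.coeff_mul_X_pow']
      split_ifs with h
      · rw [Polynomial.coeff_C_mul]
      · rw [mul_zero]
    have hL : ((sylv d d' M).mulVec x) (r, i)
        = ∑ t : Fin d', ∑ j : Fin (m + n), (sylv d d' M) (r, i) (t, j) * x (t, j) := by
      simp only [Matrix.mulVec, dotProduct]
      rw [Fintype.sum_prod_type]
    rw [hL, Finset.sum_comm]
    refine Finset.sum_congr rfl fun j _ => ?_
    rw [hR j]
    refine Finset.sum_congr rfl fun t _ => ?_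
    simp only [sylv]
    by_cases hA : (t : ℕ) ≤ (r : ℕ) ∧ (r : ℕ) ≤ (t : ℕ) + d
    · rw [if_pos hA, if_pos hA.1]
      ring
    · rw [if_neg hA, zero_mul]
      by_cases hB : (t : ℕ) ≤ (r : ℕ)
      · rw [if_pos hB]
        rw [Polynomial.coeff_eq_zero_of_natDegree_lt
          (lt_of_le_of_lt (hdeg i j) (by omega)), mul_zero]
      · rw [if_neg hB, mul_zero]
  have hker : ∀ x : Fin d' × Fin (m + n) → F,
      (sylv d d' M).mulVecLin x = 0 ↔ ∀ i' : Fin m, ∑ j, M i' j * P x j = 0 := by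
    intro x
    rw [Matrix.mulVecLin_apply]
    constructor
    · intro hx i'
      ext s
      rw [Polynomial.coeff_zero]
      by_cases hs : s < d' + d
      · have h1 := congrFun hx (⟨s, hs⟩, i')
        rw [Pi.zero_apply] at h1
        rw [← hmv x ⟨s, hs⟩ i']
        exact h1
      · rw [Polynomial.finset_sum_coeff]
        apply Finset.sum_eq_zero
        intro j _
        rw [Polynomial.coeff_mul]
        apply Finset.sum_eq_zero
        intro ab hab
        rw [Finset.HasAntidiagonal.mem_antidiagonal] at hab
        by_cases ha : ab.1 ≤ d
        · rw [coeffP, dif_neg (by omega), mul_zero]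
        · rw [Polynomial.coeff_eq_zero_of_natDegree_lt
            (lt_of_le_of_lt (hdeg i' j) (by omega)), zero_mul]
    · intro hx
      funext ri
      obtain ⟨r, i'⟩ := ri
      rw [Pi.zero_apply, hmv x r i', hx i', Polynomial.coeff_zero]
  set v : ((i : Fin n) × Fin (d' - rowDeg N i)) → (Fin d' × Fin (m + n) → F) :=
    fun b tj => (X ^ (b.2 : ℕ) * N b.1 tj.2).coeff (tj.1 : ℕ) with hv
  have hXNdeg : ∀ (b : (i : Fin n) × Fin (d' - rowDeg N i)) (j : Fin (m + n)),
      (X ^ (b.2 : ℕ) * N b.1 j).natDegree < d' := by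
    intro b j
    have h1 : (X ^ (b.2 : ℕ) * N b.1 j).natDegree ≤ (b.2 : ℕ) + (N b.1 j).natDegree := by
      refine le_trans Polynomial.natDegree_mul_le ?_
      rw [Polynomial.natDegree_X_pow]
    have h2 := natDegree_le_rowDeg N b.1 j
    have h3 := b.2.isLt
    have h4 := hεle b.1
    omega
  have hPv : ∀ b, P (v b) = fun j => X ^ (b.2 : ℕ) * N b.1 j := by
    intro b
    funext j
    ext s
    rw [coeffP]
    split
    next h =>
      simp only [hv]
    next h =>
      rw [eq_comm]
      exact Polynomial.coeff_eq_zero_of_natDegree_lt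
        (lt_of_lt_of_le (hXNdeg b j) (not_lt.mp h))
  have hvmem : ∀ b, v b ∈ LinearMap.ker (sylv d d' M).mulVecLin := by
    intro b
    rw [LinearMap.mem_ker, hker]
    intro i'
    calc ∑ j, M i' j * P (v b) j
        = ∑ j, X ^ (b.2 : ℕ) * (M i' j * N b.1 j) :=
          Finset.sum_congr rfl fun j _ => by rw [hPv b]; ring
      _ = X ^ (b.2 : ℕ) * ∑ j, M i' j * N b.1 j := (Finset.mul_sum _ _ _).symm
      _ = 0 := by rw [hMN b.1 i', mul_zero]
  have hvli : LinearIndependent F v := by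
    rw [Fintype.linearIndependent_iff]
    intro g hg
    set pp : Fin n → F[X] :=
      fun i => ∑ s : Fin (d' - rowDeg N i), Polynomial.C (g ⟨i, s⟩) * X ^ (s : ℕ) with hpp
    have h1 : ∀ j, ∑ i, pp i * N i j
        = ∑ b : ((i : Fin n) × Fin (d' - rowDeg N i)), g b • (X ^ (b.2 : ℕ) * N b.1 j) := by
      intro j
      have e1 : ∀ i, pp i * N i j
          = ∑ s : Fin (d' - rowDeg N i), Polynomial.C (g ⟨i, s⟩) * X ^ (s : ℕ) * N i j := by
        intro i
        rw [hpp]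
        dsimp only
        rw [Finset.sum_mul]
      rw [Finset.sum_congr rfl fun i _ => e1 i, Finset.sum_sigma', Finset.univ_sigma_univ]
      refine Finset.sum_congr rfl fun b _ => ?_
      rw [Polynomial.smul_eq_C_mul, mul_assoc]
    have hcomb : ∀ j, ∑ i, pp i * N i j = 0 := by
      intro j
      rw [h1 j]
      ext s
      rw [Polynomial.coeff_zero, Polynomial.finset_sum_coeff]
      by_cases hs : s < d'
      · have h3 := congrFun hg (⟨s, hs⟩, j)
        rw [Finset.sum_apply, Pi.zero_apply] at h3
        simp only [Pi.smul_apply, smul_eq_mul] at h3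
        simp only [hv] at h3
        rw [← h3]
        exact Finset.sum_congr rfl fun b _ => by rw [Polynomial.coeff_smul, smul_eq_mul]
      · apply Finset.sum_eq_zero
        intro b _
        rw [Polynomial.coeff_smul, Polynomial.coeff_eq_zero_of_natDegree_lt
          (lt_of_lt_of_le (hXNdeg b j) (not_lt.mp hs)), smul_zero]
    have hrat : ∑ i, algebraMap F[X] (RatFunc F) (pp i) • ratRow N i = 0 := by
      funext j
      rw [Finset.sum_apply, Pi.zero_apply]
      simp only [Pi.smul_apply, smul_eq_mul]
      have h5 : ∑ i, algebraMap F[X] (RatFunc F) (pp i) * ratRow N i j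
          = algebraMap F[X] (RatFunc F) (∑ i, pp i * N i j) := by
        rw [map_sum]
        exact Finset.sum_congr rfl fun i _ => by rw [_root_.map_mul]; rfl
      rw [h5, hcomb j, map_zero]
    have hNli := hN.1
    rw [Fintype.linearIndependent_iff] at hNli
    have hpp0 : ∀ i, pp i = 0 := by
      intro i
      have h6 := hNli (fun i => algebraMap F[X] (RatFunc F) (pp i)) hrat i
      exact am_inj (by rw [h6, map_zero])
    intro b
    have h4 : (pp b.1).coeff (b.2 : ℕ) = g b := by
      rw [hpp]
      dsimp only
      rw [coeff_ofFn, dif_pos b.2.isLt]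
    rw [← h4, hpp0 b.1, Polynomial.coeff_zero]
  have hspan : Submodule.span F (Set.range v) = LinearMap.ker (sylv d d' M).mulVecLin := by
    apply le_antisymm
    · rw [Submodule.span_le]
      rintro _ ⟨b, rfl⟩
      exact hvmem b
    · intro x hx
      rw [LinearMap.mem_ker] at hx
      have hx' := (hker x).mp hx
      have hmem : (fun j => algebraMap F[X] (RatFunc F) (P x j)) ∈ rowSpan N := by
        rw [hN.2.1, rightNullSpace, LinearMap.mem_ker]
        funext i'
        rw [Matrix.mulVecLin_apply, Pi.zero_apply]
        have h5 : ((ratMat M).mulVec fun j => algebraMap F[X] (RatFunc F) (P x j)) i'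
            = ∑ j, algebraMap F[X] (RatFunc F) (M i' j * P x j) := by
          simp only [Matrix.mulVec, dotProduct, ratMat, Matrix.map_apply]
          exact Finset.sum_congr rfl fun j _ => (_root_.map_mul _ _ _).symm
        rw [h5, ← map_sum, hx' i', map_zero]
      obtain ⟨pp, hpp⟩ := mem_rowSpan_poly hN _ hmem
      by_cases hSne : (Finset.univ.filter fun i => pp i ≠ 0).Nonempty
      · obtain ⟨i0, hi0S, hi0⟩ := Finset.exists_mem_eq_sup _ hSne
          (fun i => (pp i).natDegree + rowDeg N i)
        set A := (Finset.univ.filter fun i => pp i ≠ 0).sup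
          (fun i => (pp i).natDegree + rowDeg N i) with hA
        have hppi0 : pp i0 ≠ 0 := (Finset.mem_filter.mp hi0S).2
        have hAle : ∀ i, pp i ≠ 0 → (pp i).natDegree + rowDeg N i ≤ A := by
          intro i hi
          exact Finset.le_sup (f := fun i => (pp i).natDegree + rowDeg N i) (by simp [hi])
        have hAlt : A < d' := by
          by_contra hA'
          push_neg at hA'
          obtain ⟨j0, hj0⟩ := exists_coeff_ne_zero hN pp A hAle i0 hppi0 hi0.symm
          apply hj0
          rw [← hpp j0, coeffP, dif_neg (by omega)]
        have hcexp : ∀ i,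
            (∑ s : Fin (d' - rowDeg N i), Polynomial.C ((pp i).coeff (s : ℕ)) * X ^ (s : ℕ))
              = pp i := by
          intro i
          apply ofFn_eq
          intro s hs
          rcases eq_or_ne (pp i) 0 with h | h
          · rw [h, Polynomial.coeff_zero]
          · apply Polynomial.coeff_eq_zero_of_natDegree_lt
            have := hAle i h
            omega
        have hx_eq : x = ∑ b : ((i : Fin n) × Fin (d' - rowDeg N i)),
            ((pp b.1).coeff (b.2 : ℕ)) • v b := by
          funext tj
          obtain ⟨t, j⟩ := tj
          have hLx : x (t, j) = (P x j).coeff (t : ℕ) := by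
            rw [coeffP, dif_pos t.isLt]
          rw [hLx, hpp j, Finset.sum_apply]
          simp only [Pi.smul_apply, smul_eq_mul]
          simp only [hv]
          rw [Polynomial.finset_sum_coeff]
          have e2 : ∀ i, (pp i * N i j).coeff (t : ℕ)
              = ∑ s : Fin (d' - rowDeg N i),
                  (pp i).coeff (s : ℕ) * (X ^ (s : ℕ) * N i j).coeff (t : ℕ) := by
            intro i
            conv_lhs => rw [← hcexp i]
            rw [Finset.sum_mul, Polynomial.finset_sum_coeff]
            refine Finset.sum_congr rfl fun s _ => ?_
            rw [mul_assoc, Polynomial.coeff_C_mul]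
          rw [Finset.sum_congr rfl fun i _ => e2 i, Finset.sum_sigma', Finset.univ_sigma_univ]
        rw [hx_eq]
        exact Submodule.sum_mem _ fun b _ =>
          Submodule.smul_mem _ _ (Submodule.subset_span ⟨b, rfl⟩)
      · have hppz : ∀ i, pp i = 0 := by
          intro i
          by_contra h
          exact hSne ⟨i, by simp [h]⟩
        have hx0 : x = 0 := by
          funext tj
          obtain ⟨t, j⟩ := tj
          have hLx : x (t, j) = (P x j).coeff (t : ℕ) := by
            rw [coeffP, dif_pos t.isLt]
          rw [hLx, hpp j, Pi.zero_apply]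
          rw [Finset.sum_congr rfl fun i _ => by rw [hppz i, zero_mul]]
          simp
        rw [hx0]
        exact Submodule.zero_mem _
  have hcard : Fintype.card ((i : Fin n) × Fin (d' - rowDeg N i)) = ∑ i, (d' - rowDeg N i) := by
    simp [Fintype.card_sigma]
  have hfr : Module.finrank F (LinearMap.ker (sylv d d' M).mulVecLin)
      = ∑ i, (d' - rowDeg N i) := by
    rw [← hspan, finrank_span_eq_card hvli, hcard]
  have hrank : (sylv d d' M).rank + ∑ i, (d' - rowDeg N i) = d' * (m + n) := by
    have h1 := LinearMap.finrank_range_add_finrank_ker ((sylv d d' M).mulVecLin)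
    rw [hfr] at h1
    have h2 : Module.finrank F (Fin d' × Fin (m + n) → F) = d' * (m + n) := by
      rw [Module.finrank_pi]
      simp
    rw [h2] at h1
    exact h1
  have hsum2 : ∑ i, (d' - rowDeg N i) + ∑ i, rowDeg N i = n * d' := by
    rw [← Finset.sum_add_distrib]
    rw [Finset.sum_congr rfl fun i _ => Nat.sub_add_cancel (hεle i)]
    rw [Finset.sum_const, Finset.card_univ, Fintype.card_fin, smul_eq_mul]
  have e1 : ((n : ℤ)) * ((d' : ℕ) : ℤ) = ((n * d' : ℕ) : ℤ) := by push_cast; ring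
  have e2 : ((m : ℤ)) * ((d' : ℕ) : ℤ) = ((m * d' : ℕ) : ℤ) := by push_cast; ring
  have e3 : d' * (m + n) = m * d' + n * d' := by ring
  rw [e1, e2, e3]
  rw [e3] at hrank
  set a := m * d' with haa
  set b := n * d' with hbb
  constructor
  · omega
  · omega

end
end

section
/- Let M(λ) ∈ F[λ]^{m×(m+n)} be a polynomial matrix of degree at most d, let S_k be its Sylvester matrices, and let k' = ⌈md/n⌉ and t = nk' − md, so that 0 ≤ t < n. Then: (a) k' is the smallest index k for which the number of columns k(m+n) of S_k is greater than or equal to its number of rows (k+d)m; (b) if k' > 1 and t > 0, then M(λ) has full-Sylvester-rank if and only if S_{k'−1} has full column rank and S_{k'} has full row rank; (c) if k' = 1 or t = 0, then M(λ) has full-Sylvester-rank if and only if S_{k'} has full row rank. -/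
open Polynomial Matrix

noncomputable section

variable {F : Type*} [Field F]

section SylvAux

open Finset

variable {F : Type*} [Field F]

lemma sum_fin_split {β : Type*} [AddCommMonoid β] {a b : ℕ} (h : a = b + 1) (f : Fin a → β) :
    ∑ i, f i = (∑ i : Fin b, f ⟨i.val, by omega⟩) + f ⟨b, by omega⟩ := by
  subst h
  exact Fin.sum_univ_castSucc f

lemma rank_eq_card_cols_iff {α β : Type*} [Fintype α] [Fintype β] (A : Matrix α β F) :
    A.rank = Fintype.card β ↔ LinearIndependent F Aᵀ := by
  rw [Matrix.rank_eq_finrank_span_cols, linearIndependent_iff_card_eq_finrank_span (b := (Aᵀ : β → α → F))]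
  unfold Set.finrank
  exact eq_comm

lemma rank_eq_card_rows_iff {α β : Type*} [Fintype α] [Fintype β] (A : Matrix α β F) :
    A.rank = Fintype.card α ↔ LinearIndependent F A := by
  rw [← Matrix.rank_transpose, rank_eq_card_cols_iff, Matrix.transpose_transpose]

lemma sylv_cols_step {p q e k : ℕ} (M : Matrix (Fin p) (Fin q) F[X])
    (h : LinearIndependent F (sylv e (k+1) M)ᵀ) :
    LinearIndependent F (sylv e k M)ᵀ := by
  rw [Fintype.linearIndependent_iff (v := ((sylv e (k+1) M)ᵀ : _ → _ → F))] at h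
  rw [Fintype.linearIndependent_iff (v := ((sylv e k M)ᵀ : _ → _ → F))]
  intro g hg
  have h0 := h (fun x => if hx : (x.1 : ℕ) < k then g (⟨x.1, hx⟩, x.2) else 0) ?_
  · intro x
    have := h0 (⟨(x.1 : ℕ), by omega⟩, x.2)
    simpa using this
  · funext y
    simp only [Finset.sum_apply, Pi.smul_apply, smul_eq_mul, Pi.zero_apply,
      Matrix.transpose_apply]
    rw [Fintype.sum_prod_type]
    rw [sum_fin_split (show k + 1 = k + 1 from rfl)]
    have hlast : ∑ c : Fin q,
        (if hx : ((⟨k, by omega⟩ : Fin (k+1)) : ℕ) < k then g (⟨_, hx⟩, c) else 0) *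
          sylv e (k+1) M y (⟨k, by omega⟩, c) = 0 := by
      refine Finset.sum_eq_zero fun c _ => ?_
      rw [dif_neg (by simp)]
      ring
    rw [hlast, add_zero]
    by_cases hy : (y.1 : ℕ) < k + e
    · have h2 := congrFun hg (⟨(y.1 : ℕ), hy⟩, y.2)
      simp only [Finset.sum_apply, Pi.smul_apply, smul_eq_mul, Pi.zero_apply,
        Matrix.transpose_apply] at h2
      rw [Fintype.sum_prod_type] at h2
      rw [← h2]
      refine Finset.sum_congr rfl fun j _ => Finset.sum_congr rfl fun c _ => ?_
      rw [dif_pos (show ((⟨(j:ℕ), by omega⟩ : Fin (k+1)) : ℕ) < k from j.isLt)]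
      rfl
    · refine Finset.sum_eq_zero fun j _ => Finset.sum_eq_zero fun c _ => ?_
      have : sylv e (k+1) M y (⟨(j:ℕ), by omega⟩, c) = 0 := by
        unfold sylv
        rw [if_neg (by first | (simp; omega) | simp)]
      rw [this, mul_zero]

lemma sylv_Md_li {p q e k : ℕ} (hk : 1 ≤ k) (M : Matrix (Fin p) (Fin q) F[X])
    (h : LinearIndependent F (sylv e k M)) :
    LinearIndependent F (coeffMat e M) := by
  rw [Fintype.linearIndependent_iff (v := ((sylv e k M) : _ → _ → F))] at h
  rw [Fintype.linearIndependent_iff (v := ((coeffMat e M) : _ → _ → F))]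
  intro a ha r
  have h0 := h (fun x => if (x.1 : ℕ) = k + e - 1 then a x.2 else 0) ?_
  · have := h0 (⟨k + e - 1, by omega⟩, r)
    simpa using this
  · funext y
    simp only [Finset.sum_apply, Pi.smul_apply, smul_eq_mul, Pi.zero_apply]
    rw [Fintype.sum_prod_type]
    rw [Finset.sum_eq_single (⟨k + e - 1, by omega⟩ : Fin (k + e))]
    · by_cases hy : (y.1 : ℕ) = k - 1
      · have hent : ∀ r' : Fin p,
            sylv e k M (⟨k + e - 1, by omega⟩, r') y = coeffMat e M r' y.2 := by
          intro r'
          unfold sylv coeffMat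
          rw [if_pos (by first | (simp; omega) | simp)]
          congr 1
          simp
          omega
        have h2 := congrFun ha y.2
        simp only [Finset.sum_apply, Pi.smul_apply, smul_eq_mul, Pi.zero_apply] at h2
        rw [← h2]
        refine Finset.sum_congr rfl fun r' _ => ?_
        rw [if_pos (by simp), hent r']
      · refine Finset.sum_eq_zero fun r' _ => ?_
        have : sylv e k M (⟨k + e - 1, by omega⟩, r') y = 0 := by
          unfold sylv
          rw [if_neg (by first | (simp; omega) | simp)]
        rw [this, mul_zero]
    · intro i _ hne
      refine Finset.sum_eq_zero fun r' _ => ?_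
      rw [if_neg (by simpa [Fin.ext_iff] using hne)]
      ring
    · intro hmem
      exact absurd (Finset.mem_univ _) hmem

lemma sylv_rows_step {p q e k : ℕ} (hk : 1 ≤ k) (M : Matrix (Fin p) (Fin q) F[X])
    (h : LinearIndependent F (sylv e k M)) :
    LinearIndependent F (sylv e (k+1) M) := by
  have hMd := sylv_Md_li hk M h
  rw [Fintype.linearIndependent_iff (v := ((sylv e k M) : _ → _ → F))] at h
  rw [Fintype.linearIndependent_iff (v := ((coeffMat e M) : _ → _ → F))] at hMd
  rw [Fintype.linearIndependent_iff (v := ((sylv e (k+1) M) : _ → _ → F))]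
  intro g hg
  have hA : ∀ x : Fin (k + e) × Fin p, g (⟨(x.1 : ℕ), by omega⟩, x.2) = 0 := by
    refine h (fun x => g (⟨(x.1 : ℕ), by omega⟩, x.2)) ?_
    funext y
    simp only [Finset.sum_apply, Pi.smul_apply, smul_eq_mul, Pi.zero_apply]
    have h2 := congrFun hg (⟨(y.1 : ℕ), by omega⟩, y.2)
    simp only [Finset.sum_apply, Pi.smul_apply, smul_eq_mul, Pi.zero_apply] at h2
    rw [Fintype.sum_prod_type] at h2 ⊢
    rw [sum_fin_split (show k + 1 + e = (k + e) + 1 by omega)] at h2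
    have hlast : ∑ r' : Fin p,
        g (⟨k + e, by omega⟩, r') *
          sylv e (k+1) M (⟨k + e, by omega⟩, r') (⟨(y.1:ℕ), by omega⟩, y.2) = 0 := by
      refine Finset.sum_eq_zero fun r' _ => ?_
      have : sylv e (k+1) M (⟨k + e, by omega⟩, r') (⟨(y.1:ℕ), by omega⟩, y.2) = 0 := by
        unfold sylv
        rw [if_neg (by first | (simp; omega) | simp)]
      rw [this, mul_zero]
    rw [hlast, add_zero] at h2
    rw [← h2]
    rfl
  have hB : ∀ r : Fin p, g (⟨k + e, by omega⟩, r) = 0 := by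
    refine hMd (fun r => g (⟨k + e, by omega⟩, r)) ?_
    funext c
    simp only [Finset.sum_apply, Pi.smul_apply, smul_eq_mul, Pi.zero_apply]
    have h2 := congrFun hg (⟨k, by omega⟩, c)
    simp only [Finset.sum_apply, Pi.smul_apply, smul_eq_mul, Pi.zero_apply] at h2
    rw [Fintype.sum_prod_type] at h2
    rw [sum_fin_split (show k + 1 + e = (k + e) + 1 by omega)] at h2
    have hmain : (∑ i : Fin (k + e), ∑ r' : Fin p,
        g (⟨(i : ℕ), by omega⟩, r') *
          sylv e (k+1) M (⟨(i : ℕ), by omega⟩, r') (⟨k, by omega⟩, c)) = 0 := by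
      refine Finset.sum_eq_zero fun i _ => Finset.sum_eq_zero fun r' _ => ?_
      rw [hA (i, r')]
      ring
    rw [hmain, zero_add] at h2
    rw [← h2]
    refine Finset.sum_congr rfl fun r' _ => ?_
    congr 1
    unfold sylv coeffMat
    rw [if_pos (by simp)]
    congr 1
    simp
  intro x
  by_cases hx : (x.1 : ℕ) < k + e
  · have := hA (⟨(x.1 : ℕ), hx⟩, x.2)
    simpa using this
  · have hx' : (x.1 : ℕ) = k + e := by omega
    have := hB x.2
    have hxx : x = (⟨k + e, by omega⟩, x.2) := by
      ext
      · exact hx'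
      · rfl
    rw [hxx]
    exact this

lemma sylv_cols_mono {p q e k : ℕ} (M : Matrix (Fin p) (Fin q) F[X]) :
    ∀ j, LinearIndependent F (sylv e (k + j) M)ᵀ → LinearIndependent F (sylv e k M)ᵀ := by
  intro j
  induction j with
  | zero => exact id
  | succ j ih => exact fun h => ih (sylv_cols_step M h)

lemma sylv_rows_mono {p q e k : ℕ} (hk : 1 ≤ k) (M : Matrix (Fin p) (Fin q) F[X]) :
    ∀ j, LinearIndependent F (sylv e k M) → LinearIndependent F (sylv e (k + j) M) := by
  intro j
  induction j with
  | zero => exact id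
  | succ j ih => exact fun h => sylv_rows_step (hk.trans (Nat.le_add_right k j)) M (ih h)

end SylvAux

/-- At most two rank tests determine full-Sylvester-rank, where `k' = ⌈md/n⌉` and
`nk' = md + t` with `0 ≤ t < n`: (a) `k'` is the smallest index `k` for which `S_k`
has at least as many columns as rows; (b) if `k' > 1` and `t > 0`, `M(λ)` has
full-Sylvester-rank iff `S_{k'-1}` has full column rank and `S_{k'}` full row rank;
(c) if `k' = 1` or `t = 0`, iff `S_{k'}` has full row rank. -/
theorem hasFullSylvesterRank_iff_two_ranks {F : Type*} [Field F] {m n d : ℕ}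
    (hm : 0 < m) (hn : 0 < n) (hd : 0 < d)
    (M : Matrix (Fin m) (Fin (m + n)) F[X]) (hdeg : ∀ i j, (M i j).natDegree ≤ d)
    (k' t : ℕ) (hk' : k' = ⌈(m * d : ℚ) / (n : ℚ)⌉₊)
    (ht : n * k' = m * d + t) (htn : t < n) :
    ((k' + d) * m ≤ k' * (m + n) ∧ ∀ k < k', ¬((k + d) * m ≤ k * (m + n))) ∧
    (1 < k' → 0 < t →
      (HasFullSylvesterRank d M ↔
        (sylv d (k' - 1) M).rank = (k' - 1) * (m + n) ∧
        (sylv d k' M).rank = (k' + d) * m)) ∧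
    (k' = 1 ∨ t = 0 →
      (HasFullSylvesterRank d M ↔ (sylv d k' M).rank = (k' + d) * m)) := by
  have hmd : 0 < m * d := Nat.mul_pos hm hd
  have hk'pos : 1 ≤ k' := by
    rcases Nat.eq_zero_or_pos k' with h0 | h
    · exfalso
      rw [h0, Nat.mul_zero] at ht
      linarith
    · exact h
  have keyA : ∀ k : ℕ, ((k + d) * m ≤ k * (m + n) ↔ k' ≤ k) := by
    intro k
    have hexp : (k + d) * m ≤ k * (m + n) ↔ d * m ≤ k * n := by
      rw [Nat.add_mul, Nat.mul_add, Nat.add_le_add_iff_left]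
    rw [hexp]
    constructor
    · intro h
      by_contra hlt
      push_neg at hlt
      have h1 : (k + 1) * n ≤ k' * n := Nat.mul_le_mul_right _ hlt
      nlinarith [ht, htn, h, h1]
    · intro h
      have h1 : k' * n ≤ k * n := Nat.mul_le_mul_right _ h
      nlinarith [ht, h1]
  have rowsIff : ∀ k : ℕ,
      ((sylv d k M).rank = (k + d) * m ↔ LinearIndependent F (sylv d k M)) := by
    intro k
    have := rank_eq_card_rows_iff (sylv d k M)
    simpa using this
  have colsIff : ∀ k : ℕ,
      ((sylv d k M).rank = k * (m + n) ↔ LinearIndependent F (sylv d k M)ᵀ) := by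
    intro k
    have := rank_eq_card_cols_iff (sylv d k M)
    simpa using this
  have minRow : ∀ k, k' ≤ k → min ((k + d) * m) (k * (m + n)) = (k + d) * m :=
    fun k h => Nat.min_eq_left ((keyA k).mpr h)
  have minCol : ∀ k, k < k' → min ((k + d) * m) (k * (m + n)) = k * (m + n) := by
    intro k h
    have hnot : ¬ (k + d) * m ≤ k * (m + n) := fun hc => absurd ((keyA k).mp hc) (by omega)
    exact Nat.min_eq_right (Nat.le_of_not_le hnot)
  have fwdRow : HasFullSylvesterRank d M → (sylv d k' M).rank = (k' + d) * m := by
    intro hF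
    rw [hF k' hk'pos, minRow k' le_rfl]
  have fwdCol : 1 < k' → HasFullSylvesterRank d M →
      (sylv d (k' - 1) M).rank = (k' - 1) * (m + n) := by
    intro h1 hF
    rw [hF (k' - 1) (by omega), minCol (k' - 1) (by omega)]
  have bwdRows : (sylv d k' M).rank = (k' + d) * m →
      ∀ k, k' ≤ k → (sylv d k M).rank = min ((k + d) * m) (k * (m + n)) := by
    intro hr k hkk
    have hLI : LinearIndependent F (sylv d k' M) := (rowsIff k').mp hr
    rw [minRow k hkk]
    obtain ⟨j, rfl⟩ := Nat.exists_eq_add_of_le hkk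
    exact (rowsIff _).mpr (sylv_rows_mono hk'pos M j hLI)
  have bwdCols : ∀ K, (sylv d K M).rank = K * (m + n) →
      ∀ k, k ≤ K → (sylv d k M).rank = k * (m + n) := by
    intro K hr k hkK
    have hLI : LinearIndependent F (sylv d K M)ᵀ := (colsIff K).mp hr
    obtain ⟨j, rfl⟩ := Nat.exists_eq_add_of_le hkK
    exact (colsIff k).mpr (sylv_cols_mono M j hLI)
  refine ⟨⟨(keyA k').mpr le_rfl, fun k hk hc => absurd ((keyA k).mp hc) (by omega)⟩, ?_, ?_⟩
  · intro h1 ht0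
    constructor
    · intro hF
      exact ⟨fwdCol h1 hF, fwdRow hF⟩
    · rintro ⟨hc, hr⟩ k hk1
      by_cases hkk : k' ≤ k
      · exact bwdRows hr k hkk
      · rw [minCol k (by omega)]
        exact bwdCols (k' - 1) hc k (by omega)
  · intro hc1
    constructor
    · exact fun hF => fwdRow hF
    · intro hr k hk1
      by_cases hkk : k' ≤ k
      · exact bwdRows hr k hkk
      · have ht0 : t = 0 := by
          rcases hc1 with h | h
          · omega
          · exact h
        subst ht0
        have h3 : n * k' = m * d := by simpa using ht
        have heq : (k' + d) * m = k' * (m + n) := by nlinarith [h3]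
        rw [minCol k (by omega)]
        exact bwdCols k' (by rw [← heq]; exact hr) k (by omega)


end
end

section
/- Let M(λ) = M_0 + M_1λ + ⋯ + M_dλ^d ∈ F[λ]^{m×(m+n)} be a polynomial matrix of degree at most d. If M(λ) has full-Sylvester-rank, then M(λ) is a minimal basis with rank(M_d) = m, i.e., with all its row degrees equal to d. -/
open Polynomial Matrix

set_option synthInstance.maxHeartbeats 1000000
set_option maxHeartbeats 1000000

noncomputable section

variable {F : Type*} [Field F]

lemma sum_smul_ratRow {p q : ℕ} (M : Matrix (Fin p) (Fin q) F[X]) (u : Fin p → RatFunc F) :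
    ∑ i, u i • ratRow M i = u ᵥ* ratMat M := by
  funext a
  simp [ratRow, ratMat, Matrix.vecMul, dotProduct, Finset.sum_apply]

lemma mem_rowSpan_iff {p q : ℕ} (M : Matrix (Fin p) (Fin q) F[X]) (x : Fin q → RatFunc F) :
    x ∈ rowSpan M ↔ ∃ u : Fin p → RatFunc F, x = u ᵥ* ratMat M := by
  rw [rowSpan, Submodule.mem_span_range_iff_exists_fun]
  constructor
  · rintro ⟨u, hu⟩; exact ⟨u, by rw [← hu, sum_smul_ratRow]⟩
  · rintro ⟨u, hu⟩; exact ⟨u, by rw [sum_smul_ratRow, hu]⟩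

lemma ratVec_vecMul {p q : ℕ} (A : Matrix (Fin p) (Fin q) F[X]) (v : Fin p → F[X]) :
    (fun a => algebraMap F[X] (RatFunc F) ((v ᵥ* A) a))
      = (fun i => algebraMap F[X] (RatFunc F) (v i)) ᵥ* ratMat A := by
  funext a
  simp [Matrix.vecMul, dotProduct, ratMat, map_sum]

lemma coeff_sum_eq_sylv_mulVec {p q e k : ℕ} (M : Matrix (Fin p) (Fin q) F[X])
    (hdeg : ∀ i j, (M i j).natDegree ≤ e) (x : Fin k × Fin q → F)
    (r : Fin (k + e)) (i : Fin p) :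
    (∑ b : Fin q, M i b * ∑ j : Fin k, C (x (j, b)) * X ^ (j : ℕ)).coeff (r : ℕ)
      = (sylv e k M).mulVec x (r, i) := by
  rw [Matrix.mulVec, dotProduct, Fintype.sum_prod_type]
  simp_rw [Finset.mul_sum, finset_sum_coeff]
  rw [Finset.sum_comm]
  refine Finset.sum_congr rfl fun j _ => Finset.sum_congr rfl fun b _ => ?_
  have : M i b * (C (x (j, b)) * X ^ (j : ℕ)) = (M i b * C (x (j, b))) * X ^ (j : ℕ) := by ring
  rw [this, coeff_mul_X_pow', coeff_mul_C, sylv]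
  by_cases h1 : (j : ℕ) ≤ (r : ℕ)
  · by_cases h2 : (r : ℕ) ≤ (j : ℕ) + e
    · simp [h1, h2]
    · have hz : (M i b).coeff ((r : ℕ) - (j : ℕ)) = 0 := by
        apply coeff_eq_zero_of_natDegree_lt
        have := hdeg i b
        omega
      simp [h1, h2, hz]
  · simp [h1]

lemma sylv_surjective {p q e k : ℕ} (M : Matrix (Fin p) (Fin q) F[X])
    (hrank : (sylv e k M).rank = (k + e) * p) :
    Function.Surjective (sylv e k M).mulVecLin := by
  rw [← LinearMap.range_eq_top]
  apply Submodule.eq_top_of_finrank_eq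
  rw [← Matrix.rank, hrank]
  simp [Module.finrank_fintype_fun_eq_card]

lemma exists_right_inverse {m n d : ℕ} (hm : 0 < m) (hn : 0 < n) (hd : 0 < d)
    (M : Matrix (Fin m) (Fin (m + n)) F[X]) (hdeg : ∀ i j, (M i j).natDegree ≤ d)
    (hfull : HasFullSylvesterRank d M) :
    ∃ B : Matrix (Fin (m + n)) (Fin m) F[X], M * B = 1 := by
  set k := d * m with hk
  have hk1 : 1 ≤ k := Nat.one_le_iff_ne_zero.mpr (by positivity)
  have hmin : min ((k + d) * m) (k * (m + n)) = (k + d) * m := by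
    apply Nat.min_eq_left
    have : d * m ≤ k * n := by
      calc d * m = k := rfl
      _ = k * 1 := (Nat.mul_one k).symm
      _ ≤ k * n := Nat.mul_le_mul_left k hn
    nlinarith
  have hsurj := sylv_surjective M (by rw [hfull k hk1, hmin])
  have h0 : 0 < k + d := by omega
  -- for each a, get coefficient vector
  have key : ∀ a : Fin m, ∃ x : Fin k × Fin (m + n) → F,
      (sylv d k M).mulVec x = fun r => if r = (⟨0, h0⟩, a) then 1 else 0 := fun a => hsurj _
  choose xv hxv using key
  refine ⟨Matrix.of fun b a => ∑ j : Fin k, C (xv a (j, b)) * X ^ (j : ℕ), ?_⟩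
  ext i a r
  by_cases hr : r < k + d
  · have := coeff_sum_eq_sylv_mulVec M hdeg (xv a) ⟨r, hr⟩ i
    rw [Matrix.mul_apply]
    simp only [Matrix.of_apply]
    rw [show ((∑ b, M i b * ∑ j : Fin k, C (xv a (j, b)) * X ^ (j:ℕ)).coeff r)
        = (∑ b : Fin (m+n), M i b * ∑ j : Fin k, C (xv a (j, b)) * X ^ (j:ℕ)).coeff
          ((⟨r, hr⟩ : Fin (k+d)) : ℕ) from rfl, this, hxv a]
    by_cases hia : i = a
    · subst hia
      by_cases hr0 : r = 0
      · subst hr0; simp [Prod.ext_iff, Fin.ext_iff, Matrix.one_apply]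
      · simp [Prod.ext_iff, Fin.ext_iff, hr0, Matrix.one_apply, coeff_one]
    · simp [Prod.ext_iff, Fin.ext_iff, hia, Matrix.one_apply, Ne.symm,
        (by exact hia : ¬ i = a)]
  · push_neg at hr
    rw [Matrix.mul_apply]
    simp only [Matrix.of_apply]
    have hL : ((∑ b, M i b * ∑ j : Fin k, C (xv a (j, b)) * X ^ (j:ℕ))).coeff r = 0 := by
      apply coeff_eq_zero_of_natDegree_lt
      apply lt_of_le_of_lt (natDegree_sum_le_of_forall_le _ _ ?_) (show k + d - 1 < r by omega)
      intro b _
      apply natDegree_mul_le.trans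
      have h1 : (∑ j : Fin k, C (xv a (j, b)) * X ^ (j:ℕ)).natDegree ≤ k - 1 := by
        apply natDegree_sum_le_of_forall_le
        intro j _
        apply (natDegree_C_mul_X_pow_le _ _).trans
        omega
      have := hdeg i b
      omega
    rw [hL]
    have : (1 : Matrix (Fin m) (Fin m) F[X]) i a = if i = a then 1 else 0 := Matrix.one_apply
    rw [this]
    split_ifs
    · rw [coeff_one]
      have : ¬ r = 0 := by omega
      simp [this]
    · simp

lemma sylv_rows_li {p q e k : ℕ} (M : Matrix (Fin p) (Fin q) F[X])
    (hrank : (sylv e k M).rank = (k + e) * p) :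
    LinearIndependent F (sylv e k M) := by
  show LinearIndependent F (sylv e k M).row
  rw [linearIndependent_iff_card_eq_finrank_span]
  rw [Set.finrank, ← Matrix.rank_eq_finrank_span_row, hrank]
  simp

lemma coeffMat_vecMul_eq_zero {m n d : ℕ} (hm : 0 < m) (hn : 0 < n) (hd : 0 < d)
    (M : Matrix (Fin m) (Fin (m + n)) F[X]) (hdeg : ∀ i j, (M i j).natDegree ≤ d)
    (hfull : HasFullSylvesterRank d M) :
    ∀ u : Fin m → F, u ᵥ* coeffMat d M = 0 → u = 0 := by
  intro u hu
  set k := d * m with hk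
  have hk1 : 1 ≤ k := Nat.one_le_iff_ne_zero.mpr (by positivity)
  have hmin : min ((k + d) * m) (k * (m + n)) = (k + d) * m := by
    apply Nat.min_eq_left
    have : d * m ≤ k * n := by
      calc d * m = k := rfl
      _ = k * 1 := (Nat.mul_one k).symm
      _ ≤ k * n := Nat.mul_le_mul_left k hn
    nlinarith
  have hli := sylv_rows_li M (by rw [hfull k hk1, hmin])
  have hli := Fintype.linearIndependent_iff.mp hli
  have hlast : k + d - 1 < k + d := by omega
  set g : Fin (k + d) × Fin m → F := fun r => if (r.1 : ℕ) = k + d - 1 then u r.2 else 0 with hg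
  have hzero : ∑ r, g r • sylv d k M r = 0 := by
    funext c
    obtain ⟨j, b⟩ := c
    rw [Finset.sum_apply]
    simp only [Pi.smul_apply, smul_eq_mul]
    rw [Fintype.sum_prod_type]
    rw [show (0 : Fin k × Fin (m+n) → F) (j, b) = 0 from rfl]
    have hj : (j : ℕ) < k := j.2
    have hS : ∀ i : Fin m, sylv d k M (⟨k + d - 1, hlast⟩, i) (j, b)
        = if (j : ℕ) = k - 1 then (M i b).coeff d else 0 := by
      intro i
      show (if (j : ℕ) ≤ k + d - 1 ∧ k + d - 1 ≤ (j : ℕ) + d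
        then (M i b).coeff (k + d - 1 - (j : ℕ)) else 0) = _
      by_cases hjk : (j : ℕ) = k - 1
      · rw [if_pos (by omega), if_pos hjk]
        congr 1
        omega
      · rw [if_neg (by omega), if_neg hjk]
    calc ∑ r1 : Fin (k+d), ∑ i : Fin m, g (r1, i) * sylv d k M (r1, i) (j, b)
        = ∑ r1 : Fin (k+d), ∑ i : Fin m,
            (if r1 = (⟨k + d - 1, hlast⟩ : Fin (k+d)) then u i * sylv d k M (r1, i) (j, b) else 0) := by
          refine Finset.sum_congr rfl fun r1 _ => Finset.sum_congr rfl fun i _ => ?_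
          show (if (r1 : ℕ) = k + d - 1 then u i else 0) * sylv d k M (r1, i) (j, b) = _
          by_cases hr1 : r1 = (⟨k + d - 1, hlast⟩ : Fin (k+d))
          · rw [if_pos (show (r1 : ℕ) = k + d - 1 by rw [hr1]), if_pos hr1]
          · have h2 : ¬ (r1 : ℕ) = k + d - 1 := by rw [Fin.ext_iff] at hr1; exact hr1
            rw [if_neg h2, if_neg hr1, zero_mul]
      _ = ∑ i : Fin m, u i * sylv d k M (⟨k + d - 1, hlast⟩, i) (j, b) := by
          rw [Finset.sum_comm]
          refine Finset.sum_congr rfl fun i _ => ?_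
          rw [Finset.sum_ite_eq' Finset.univ (⟨k + d - 1, hlast⟩ : Fin (k+d))
            (fun r1 => u i * sylv d k M (r1, i) (j, b))]
          simp
      _ = 0 := by
          simp_rw [hS]
          by_cases hjk : (j : ℕ) = k - 1
          · simp only [hjk, if_pos]
            have := congrFun hu b
            rw [Matrix.vecMul, dotProduct] at this
            simpa [coeffMat] using this
          · simp [hjk]
  funext i
  have := hli g hzero (⟨k + d - 1, hlast⟩, i)
  rw [hg] at this
  simpa using this

lemma coeffMat_rank {m n d : ℕ} (hm : 0 < m) (hn : 0 < n) (hd : 0 < d)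
    (M : Matrix (Fin m) (Fin (m + n)) F[X]) (hdeg : ∀ i j, (M i j).natDegree ≤ d)
    (hfull : HasFullSylvesterRank d M) : (coeffMat d M).rank = m := by
  have hli : LinearIndependent F (coeffMat d M) := by
    refine Fintype.linearIndependent_iff.mpr ?_
    intro u hsum
    have : u ᵥ* coeffMat d M = 0 := by
      funext b
      have := congrFun hsum b
      rw [Finset.sum_apply] at this
      simpa [Matrix.vecMul, dotProduct] using this
    have := coeffMat_vecMul_eq_zero hm hn hd M hdeg hfull u this
    exact fun i => congrFun this i
  rw [LinearIndependent.rank_matrix (M := coeffMat d M) hli]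
  simp

lemma rowDeg_eq {m n d : ℕ} (hm : 0 < m) (hn : 0 < n) (hd : 0 < d)
    (M : Matrix (Fin m) (Fin (m + n)) F[X]) (hdeg : ∀ i j, (M i j).natDegree ≤ d)
    (hfull : HasFullSylvesterRank d M) : ∀ i, rowDeg M i = d := by
  intro i
  apply le_antisymm
  · exact Finset.sup_le fun j _ => hdeg i j
  · by_contra hlt
    push_neg at hlt
    have hrow : ∀ j, (M i j).coeff d = 0 := by
      intro j
      apply coeff_eq_zero_of_natDegree_lt
      exact lt_of_le_of_lt (Finset.le_sup (f := fun j => (M i j).natDegree) (Finset.mem_univ j)) hlt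
    have : (Pi.single i 1 : Fin m → F) ᵥ* coeffMat d M = 0 := by
      funext b
      rw [Matrix.vecMul, dotProduct]
      rw [Finset.sum_eq_single i]
      · simp [coeffMat, hrow b]
      · intro c _ hc; simp [Pi.single_apply, hc]
      · simp
    have h0 := coeffMat_vecMul_eq_zero hm hn hd M hdeg hfull _ this
    have := congrFun h0 i
    simp at this

lemma ratMat_mul_one {m n : ℕ} (M : Matrix (Fin m) (Fin (m + n)) F[X])
    (B : Matrix (Fin (m + n)) (Fin m) F[X]) (hB : M * B = 1) :
    ratMat M * ratMat B = 1 := by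
  rw [ratMat, ratMat, ← Matrix.map_mul, hB]
  exact Matrix.map_one _ (map_zero _) (map_one _)

lemma ratRow_li {m n : ℕ} (M : Matrix (Fin m) (Fin (m + n)) F[X])
    (B : Matrix (Fin (m + n)) (Fin m) F[X]) (hB : M * B = 1) :
    LinearIndependent (RatFunc F) (ratRow M) := by
  rw [Fintype.linearIndependent_iff]
  intro u hsum
  rw [sum_smul_ratRow] at hsum
  have : u = 0 := by
    calc u = (u ᵥ* ratMat M) ᵥ* ratMat B := by
            rw [Matrix.vecMul_vecMul, ratMat_mul_one M B hB, Matrix.vecMul_one]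
      _ = 0 := by rw [hsum, Matrix.zero_vecMul]
  exact fun i => congrFun this i

lemma natDegree_le_of_vecMul {m n d : ℕ}
    (M : Matrix (Fin m) (Fin (m + n)) F[X]) (hdeg : ∀ i j, (M i j).natDegree ≤ d)
    (hMd : ∀ u : Fin m → F, u ᵥ* coeffMat d M = 0 → u = 0)
    (c : Fin m → F[X]) (t : ℕ) (htd : d ≤ t)
    (hPt : ∀ a, ((c ᵥ* M) a).natDegree ≤ t) : ∀ i, (c i).natDegree ≤ t - d := by
  by_cases hc : ∀ i, c i = 0
  · intro i; simp [hc i]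
  push_neg at hc
  obtain ⟨i₁, hi₁⟩ := hc
  set e := Finset.univ.sup (fun i => (c i).natDegree) with he
  have hle : ∀ i, (c i).natDegree ≤ e :=
    fun i => Finset.le_sup (f := fun i => (c i).natDegree) (Finset.mem_univ i)
  set u : Fin m → F := fun i => (c i).coeff e with hu
  have hune : u ≠ 0 := by
    obtain ⟨i₀, -, hi₀⟩ := Finset.exists_mem_eq_sup Finset.univ
      ⟨i₁, Finset.mem_univ i₁⟩ (fun i => (c i).natDegree)
    intro h0
    by_cases h : c i₀ = 0
    · have he0 : e = 0 := by rw [he, hi₀, h, natDegree_zero]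
      have hn1 : (c i₁).natDegree = 0 := Nat.le_zero.mp (he0 ▸ hle i₁)
      have : u i₁ ≠ 0 := by
        rw [hu]
        simp only [he0, ← hn1]
        rw [← Polynomial.leadingCoeff]
        exact Polynomial.leadingCoeff_ne_zero.mpr hi₁
      exact this (congrFun h0 i₁)
    · have he2 : e = (c i₀).natDegree := he.trans hi₀
      have : u i₀ ≠ 0 := by
        rw [hu]
        simp only [he2]
        rw [← Polynomial.leadingCoeff]
        exact Polynomial.leadingCoeff_ne_zero.mpr h
      exact this (congrFun h0 i₀)
  have hvne : u ᵥ* coeffMat d M ≠ 0 := fun hz => hune (hMd u hz)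
  obtain ⟨b, hb⟩ : ∃ b, (u ᵥ* coeffMat d M) b ≠ 0 := by
    by_contra hall
    push_neg at hall
    exact hvne (funext hall)
  have hco : ((c ᵥ* M) b).coeff (e + d) = (u ᵥ* coeffMat d M) b := by
    rw [Matrix.vecMul, Matrix.vecMul, dotProduct, dotProduct, finset_sum_coeff]
    exact Finset.sum_congr rfl fun i _ =>
      coeff_mul_add_eq_of_natDegree_le (hle i) (hdeg i b)
  have : e + d ≤ ((c ᵥ* M) b).natDegree := le_natDegree_of_ne_zero (by rw [hco]; exact hb)
  have het : e + d ≤ t := this.trans (hPt b)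
  intro i
  have := hle i
  omega

lemma algC_eq (a : F) :
    algebraMap F[X] (RatFunc F) (C a) = algebraMap F (RatFunc F) a := by
  rw [← Polynomial.algebraMap_eq, ← IsScalarTower.algebraMap_apply]

lemma mem_span_shifts {m n d : ℕ}
    (M : Matrix (Fin m) (Fin (m + n)) F[X]) (hdeg : ∀ i j, (M i j).natDegree ≤ d)
    (B : Matrix (Fin (m + n)) (Fin m) F[X]) (hB : M * B = 1)
    (hMd : ∀ u : Fin m → F, u ᵥ* coeffMat d M = 0 → u = 0)
    (t : ℕ) (htd : d ≤ t)
    (w : Fin (m + n) → F[X]) (hw : ∀ a, (w a).natDegree ≤ t)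
    (hmem : (fun a => algebraMap F[X] (RatFunc F) (w a)) ∈ rowSpan M) :
    (fun a => algebraMap F[X] (RatFunc F) (w a)) ∈ Submodule.span F
      (Set.range (fun is : Fin m × Fin (t - d + 1) =>
        (algebraMap F[X] (RatFunc F) (X ^ (is.2 : ℕ))) • ratRow M is.1)) := by
  rw [mem_rowSpan_iff] at hmem
  obtain ⟨u, hu⟩ := hmem
  set c : Fin m → F[X] := w ᵥ* B with hc
  have hrc : (fun i => algebraMap F[X] (RatFunc F) (c i)) = u := by
    rw [hc, ratVec_vecMul, hu, Matrix.vecMul_vecMul, ratMat_mul_one M B hB,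
      Matrix.vecMul_one]
  have hcM : c ᵥ* M = w := by
    have h2 : (fun a => algebraMap F[X] (RatFunc F) ((c ᵥ* M) a))
        = (fun a => algebraMap F[X] (RatFunc F) (w a)) := by
      rw [ratVec_vecMul, hrc, ← hu]
    funext a
    exact IsFractionRing.injective F[X] (RatFunc F) (congrFun h2 a)
  have hdc : ∀ i, (c i).natDegree ≤ t - d :=
    natDegree_le_of_vecMul M hdeg hMd c t htd (by rw [hcM]; exact fun a => hw a)
  have key : (fun a => algebraMap F[X] (RatFunc F) (w a))
      = ∑ is : Fin m × Fin (t - d + 1), ((c is.1).coeff (is.2 : ℕ)) •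
          ((algebraMap F[X] (RatFunc F) (X ^ ((is.2 : ℕ)))) • ratRow M is.1) := by
    funext a
    rw [← hcM]
    rw [show ((c ᵥ* M) a) = ∑ i, c i * M i a from rfl, map_sum, Finset.sum_apply]
    rw [Fintype.sum_prod_type]
    refine Finset.sum_congr rfl fun i _ => ?_
    conv_lhs => rw [(c i).as_sum_range' (t - d + 1) (Nat.lt_succ_of_le (hdc i)),
      ← Fin.sum_univ_eq_sum_range (fun s => monomial s ((c i).coeff s))]
    rw [Finset.sum_mul, map_sum]
    refine Finset.sum_congr rfl fun s _ => ?_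
    rw [← C_mul_X_pow_eq_monomial, _root_.map_mul, _root_.map_mul, Pi.smul_apply, Pi.smul_apply,
      ratRow, Algebra.smul_def, smul_eq_mul, algC_eq, mul_assoc]
  rw [key]
  apply Submodule.sum_mem
  intro is _
  apply Submodule.smul_mem
  exact Submodule.subset_span (Set.mem_range_self is)

lemma shifts_li {m n : ℕ} (M' : Matrix (Fin m) (Fin (m + n)) F[X])
    (hli : LinearIndependent (RatFunc F) (ratRow M')) (D : Fin m → ℕ) :
    LinearIndependent F (fun x : (Σ i : Fin m, Fin (D i)) =>
      (algebraMap F[X] (RatFunc F) (X ^ (x.2 : ℕ))) • ratRow M' x.1) := by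
  rw [Fintype.linearIndependent_iff]
  intro g hg
  set p : Fin m → F[X] := fun i => ∑ s : Fin (D i), C (g ⟨i, s⟩) * X ^ (s : ℕ) with hp
  have hps : ∀ i, p i = 0 := by
    have hsum : ∑ i, (algebraMap F[X] (RatFunc F) (p i)) • ratRow M' i = 0 := by
      rw [← hg, ← Finset.univ_sigma_univ, Finset.sum_sigma]
      refine Finset.sum_congr rfl fun i _ => ?_
      rw [hp, map_sum, Finset.sum_smul]
      refine Finset.sum_congr rfl fun s _ => ?_
      rw [_root_.map_mul, algC_eq, mul_smul, algebraMap_smul]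
    have := Fintype.linearIndependent_iff.mp hli
      (fun i => algebraMap F[X] (RatFunc F) (p i)) hsum
    intro i
    exact IsFractionRing.injective F[X] (RatFunc F) (by rw [map_zero]; exact this i)
  rintro ⟨i, s⟩
  have : (p i).coeff (s : ℕ) = g ⟨i, s⟩ := by
    rw [hp]
    rw [finset_sum_coeff]
    calc (∑ s' : Fin (D i), (C (g ⟨i, s'⟩) * X ^ (s' : ℕ)).coeff (s : ℕ))
        = ∑ s' : Fin (D i), if s' = s then g ⟨i, s'⟩ else 0 := by
          refine Finset.sum_congr rfl fun s' _ => ?_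
          rw [coeff_C_mul_X_pow]
          congr 1
          simp [Fin.ext_iff, eq_comm]
      _ = g ⟨i, s⟩ := by rw [Finset.sum_ite_eq' Finset.univ s (fun s' => g ⟨i, s'⟩)]; simp
  rw [← this, hps i, coeff_zero]

/-- A polynomial matrix with full-Sylvester-rank is a minimal basis whose leading
coefficient `M_d` has full row rank `m`, i.e. all of whose row degrees equal `d`. -/
theorem isMinimalBasis_of_hasFullSylvesterRank {F : Type*} [Field F] {m n d : ℕ}
    (hm : 0 < m) (hn : 0 < n) (hd : 0 < d)
    (M : Matrix (Fin m) (Fin (m + n)) F[X]) (hdeg : ∀ i j, (M i j).natDegree ≤ d)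
    (hfull : HasFullSylvesterRank d M) :
    IsMinimalBasis M ∧ (coeffMat d M).rank = m ∧ ∀ i, rowDeg M i = d := by
  obtain ⟨B, hB⟩ := exists_right_inverse hm hn hd M hdeg hfull
  have hMd := coeffMat_vecMul_eq_zero hm hn hd M hdeg hfull
  have hLI : LinearIndependent (RatFunc F) (ratRow M) := ratRow_li M B hB
  have hRD : ∀ i, rowDeg M i = d := rowDeg_eq hm hn hd M hdeg hfull
  have hsumM : ∑ i, rowDeg M i = m * d := by
    simp only [hRD]
    rw [Finset.sum_const, Finset.card_univ, Fintype.card_fin, smul_eq_mul]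
  refine ⟨⟨hLI, rfl, ?_⟩, coeffMat_rank hm hn hd M hdeg hfull, hRD⟩
  intro M' hli' hspan'
  rw [hsumM]
  set D' : Fin m → ℕ := fun i => rowDeg M' i with hD'
  set t : ℕ := d + Finset.univ.sum D' with ht
  have htd : d ≤ t := Nat.le_add_right _ _
  have htD : ∀ i, D' i ≤ t := fun i =>
    le_trans (Finset.single_le_sum (f := D') (fun _ _ => Nat.zero_le _) (Finset.mem_univ i))
      (Nat.le_add_left _ _)
  set fam : Fin m × Fin (t - d + 1) → (Fin (m + n) → RatFunc F) :=
    fun is => (algebraMap F[X] (RatFunc F) (X ^ ((is.2 : ℕ)))) • ratRow M is.1 with hfam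
  set W := Submodule.span F (Set.range fam) with hW
  set fam' : (Σ i : Fin m, Fin (t - D' i + 1)) → (Fin (m + n) → RatFunc F) :=
    fun x => (algebraMap F[X] (RatFunc F) (X ^ ((x.2 : ℕ)))) • ratRow M' x.1 with hfam'
  have hmem' : ∀ x, fam' x ∈ W := by
    rintro ⟨i, s⟩
    have hs : (s : ℕ) + D' i ≤ t := by have h1 := s.2; have h2 := htD i; omega
    set w : Fin (m + n) → F[X] := fun a => X ^ (s : ℕ) * M' i a with hw
    have hweq : fam' ⟨i, s⟩ = fun a => algebraMap F[X] (RatFunc F) (w a) := by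
      funext a
      rw [hfam', hw]
      simp only [Pi.smul_apply, smul_eq_mul, _root_.map_mul, ratRow]
    rw [hweq, hW]
    apply mem_span_shifts M hdeg B hB hMd t htd w
    · intro a
      rw [hw]
      refine le_trans natDegree_mul_le ?_
      have h1 : (M' i a).natDegree ≤ D' i :=
        Finset.le_sup (f := fun j => (M' i j).natDegree) (Finset.mem_univ a)
      have h2 : ((X : F[X]) ^ (s : ℕ)).natDegree ≤ (s : ℕ) := natDegree_X_pow_le (s : ℕ)
      omega
    · rw [← hweq, hfam']
      rw [← hspan']
      apply Submodule.smul_mem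
      exact Submodule.subset_span (Set.mem_range_self i)
  have hli2 := shifts_li M' hli' (fun i => t - D' i + 1)
  have hfd : FiniteDimensional F ↥W := FiniteDimensional.span_of_finite F (Set.finite_range fam)
  set fam'' : (Σ i : Fin m, Fin (t - D' i + 1)) → W := fun x => ⟨fam' x, hmem' x⟩ with hfam''
  have hli3 : LinearIndependent F fam'' := by
    apply LinearIndependent.of_comp W.subtype
    exact hli2
  have hcard1 : Fintype.card (Σ i : Fin m, Fin (t - D' i + 1)) ≤ Module.finrank F ↥W :=
    hli3.fintype_card_le_finrank
  have hcard2 : Module.finrank F ↥W ≤ Fintype.card (Fin m × Fin (t - d + 1)) :=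
    finrank_range_le_card fam
  rw [Fintype.card_sigma] at hcard1
  simp only [Fintype.card_fin] at hcard1
  rw [Fintype.card_prod, Fintype.card_fin, Fintype.card_fin] at hcard2
  have hkey : ∑ i : Fin m, (t - D' i + 1) ≤ m * (t - d + 1) := le_trans hcard1 hcard2
  have e1 : m * (t + 1) = m * (t - d + 1) + m * d := by
    rw [← Nat.mul_add]
    congr 1
    omega
  have e2 : (∑ i : Fin m, (t - D' i + 1)) + Finset.univ.sum D' = m * (t + 1) := by
    rw [← Finset.sum_add_distrib]
    rw [Finset.sum_congr rfl (fun i _ => show t - D' i + 1 + D' i = t + 1 by have := htD i; omega)]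
    rw [Finset.sum_const, Finset.card_univ, Fintype.card_fin, smul_eq_mul]
  omega


end
end

section
/- Let M(λ) ∈ F[λ]^{m×(m+n)} be a polynomial matrix of degree at most d with full-Sylvester-rank and let k' = ⌈md/n⌉. Then the degree of any minimal basis dual to M(λ) is equal to k'; equivalently, the maximum right minimal index of M(λ) equals k'. -/
open Polynomial Matrix

noncomputable section

variable {F : Type*} [Field F]

/-- Bounded-degree polynomial kernel: vectors `v` with all entries of degree `< k`
and `M.mulVec v = 0`. -/
def PK {p q : ℕ} (M : Matrix (Fin p) (Fin q) F[X]) (k : ℕ) :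
    Submodule F (Fin q → F[X]) :=
  (Submodule.pi Set.univ (fun _ : Fin q => degreeLT F k)) ⊓
    (LinearMap.ker (M.mulVecLin.restrictScalars F))

lemma mem_PK {p q : ℕ} {M : Matrix (Fin p) (Fin q) F[X]} {k : ℕ} {v : Fin q → F[X]} :
    v ∈ PK M k ↔ (∀ j, v j ∈ degreeLT F k) ∧ M.mulVec v = 0 := by
  simp [PK, Submodule.mem_pi, Matrix.mulVecLin]

lemma coeff_sum_C_mul_X_pow {r : ℕ} (f : Fin r → F) (t : ℕ) :
    (∑ s : Fin r, C (f s) * X ^ (s : ℕ)).coeff t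
      = if h : t < r then f ⟨t, h⟩ else 0 := by
  rw [finset_sum_coeff]
  split_ifs with h
  · rw [Finset.sum_eq_single (⟨t, h⟩ : Fin r)]
    · simp
    · intro b _ hb
      simp only [coeff_C_mul, coeff_X_pow]
      rw [if_neg, mul_zero]
      intro he; exact hb (by ext; simp [he])
    · simp
  · apply Finset.sum_eq_zero
    intro b _
    simp only [coeff_C_mul, coeff_X_pow]
    rw [if_neg, mul_zero]
    intro he; omega

/-- Interpreting a block vector of scalars as a vector of polynomials of degree `< k`. -/
def toPolyL (k q : ℕ) : (Fin k × Fin q → F) →ₗ[F] (Fin q → F[X]) where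
  toFun x := fun j => ∑ s : Fin k, C (x (s, j)) * X ^ (s : ℕ)
  map_add' x y := by
    funext j
    simp [add_mul, Finset.sum_add_distrib]
  map_smul' c x := by
    funext j
    simp [Finset.mul_sum, smul_eq_C_mul, mul_assoc]

lemma coeff_toPolyL {k q : ℕ} (x : Fin k × Fin q → F) (j : Fin q) (t : ℕ) :
    (toPolyL k q x j).coeff t = if h : t < k then x (⟨t, h⟩, j) else 0 :=
  coeff_sum_C_mul_X_pow _ t

lemma toPolyL_mem_degreeLT {k q : ℕ} (x : Fin k × Fin q → F) (j : Fin q) :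
    toPolyL k q x j ∈ degreeLT F k := by
  rw [mem_degreeLT, degree_lt_iff_coeff_zero]
  intro t ht
  have ht' : ¬ ((t : ℕ) < k) := by exact_mod_cast not_lt.2 ht
  rw [coeff_toPolyL, dif_neg ht']


lemma mulVec_coeff_toPolyL {p q d k : ℕ} (M : Matrix (Fin p) (Fin q) F[X])
    (hdeg : ∀ i j, (M i j).natDegree ≤ d) (x : Fin k × Fin q → F) (i : Fin p) (r : ℕ) :
    ((M.mulVec (toPolyL k q x)) i).coeff r
      = ∑ c : Fin k, ∑ j : Fin q,
          (if (c : ℕ) ≤ r ∧ r ≤ (c : ℕ) + d then (M i j).coeff (r - (c : ℕ)) else 0)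
            * x (c, j) := by
  have h1 : (M.mulVec (toPolyL k q x)) i
      = ∑ j : Fin q, ∑ s : Fin k, (M i j * C (x (s, j))) * X ^ (s : ℕ) := by
    simp [Matrix.mulVec, dotProduct, toPolyL, Finset.mul_sum, mul_assoc]
  rw [h1, Finset.sum_comm]
  simp only [finset_sum_coeff, coeff_mul_X_pow', coeff_mul_C]
  refine Finset.sum_congr rfl fun c _ => Finset.sum_congr rfl fun j _ => ?_
  by_cases h1 : (c : ℕ) ≤ r
  · by_cases h2 : r ≤ (c : ℕ) + d
    · rw [if_pos h1, if_pos ⟨h1, h2⟩]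
    · rw [if_pos h1, if_neg (by tauto), zero_mul]
      have h3 : (M i j).coeff (r - (c : ℕ)) = 0 :=
        coeff_eq_zero_of_natDegree_lt (lt_of_le_of_lt (hdeg i j) (by omega))
      rw [h3, zero_mul]
  · rw [if_neg h1, if_neg (by tauto), zero_mul]

lemma sylv_mulVecLin_apply {p q d k : ℕ} (M : Matrix (Fin p) (Fin q) F[X])
    (hdeg : ∀ i j, (M i j).natDegree ≤ d) (x : Fin k × Fin q → F)
    (ri : Fin (k + d) × Fin p) :
    (sylv d k M).mulVecLin x ri = ((M.mulVec (toPolyL k q x)) ri.2).coeff (ri.1 : ℕ) := by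
  rw [mulVec_coeff_toPolyL M hdeg]
  simp [Matrix.mulVecLin, Matrix.mulVec, dotProduct, sylv, Fintype.sum_prod_type]

lemma mulVec_toPolyL_coeff_eq_zero {p q d k : ℕ} (M : Matrix (Fin p) (Fin q) F[X])
    (hdeg : ∀ i j, (M i j).natDegree ≤ d) (x : Fin k × Fin q → F) (i : Fin p)
    {r : ℕ} (hr : k + d ≤ r) :
    ((M.mulVec (toPolyL k q x)) i).coeff r = 0 := by
  rw [mulVec_coeff_toPolyL M hdeg]
  refine Finset.sum_eq_zero fun c _ => Finset.sum_eq_zero fun j _ => ?_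
  rw [if_neg (by have := c.2; omega), zero_mul]

lemma sylv_mulVecLin_eq_zero_iff {p q d k : ℕ} (M : Matrix (Fin p) (Fin q) F[X])
    (hdeg : ∀ i j, (M i j).natDegree ≤ d) (x : Fin k × Fin q → F) :
    (sylv d k M).mulVecLin x = 0 ↔ M.mulVec (toPolyL k q x) = 0 := by
  constructor
  · intro h
    funext i
    ext r
    by_cases hr : r < k + d
    · have := congrFun h (⟨⟨r, hr⟩, i⟩ : Fin (k + d) × Fin p)
      rw [sylv_mulVecLin_apply M hdeg] at this
      simpa using this
    · simp [mulVec_toPolyL_coeff_eq_zero M hdeg x i (not_lt.1 hr)]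
  · intro h
    funext ri
    rw [sylv_mulVecLin_apply M hdeg, h]
    simp

lemma toPolyL_injective (k q : ℕ) : Function.Injective (toPolyL (F := F) k q) := by
  rw [injective_iff_map_eq_zero]
  intro x hx
  funext sj
  have := congrArg (fun v => (v sj.2).coeff (sj.1 : ℕ)) hx
  simp only [coeff_toPolyL] at this
  rw [dif_pos sj.1.2] at this
  simpa using this

lemma map_toPolyL_ker_sylv {p q d k : ℕ} (M : Matrix (Fin p) (Fin q) F[X])
    (hdeg : ∀ i j, (M i j).natDegree ≤ d) :
    Submodule.map (toPolyL k q) (LinearMap.ker (sylv d k M).mulVecLin) = PK M k := by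
  apply le_antisymm
  · rintro _ ⟨x, hx, rfl⟩
    rw [mem_PK]
    exact ⟨toPolyL_mem_degreeLT x,
      (sylv_mulVecLin_eq_zero_iff M hdeg x).1 (LinearMap.mem_ker.1 hx)⟩
  · intro v hv
    obtain ⟨hv1, hv2⟩ := mem_PK.1 hv
    have hv' : toPolyL k q (fun sj : Fin k × Fin q => (v sj.2).coeff (sj.1 : ℕ)) = v := by
      funext j
      ext t
      rw [coeff_toPolyL]
      split_ifs with h
      · rfl
      · symm
        refine coeff_eq_zero_of_degree_lt (lt_of_lt_of_le (mem_degreeLT.1 (hv1 j)) ?_)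
        exact_mod_cast Nat.cast_le.2 (not_lt.1 h)
    refine ⟨fun sj => (v sj.2).coeff (sj.1 : ℕ), ?_, hv'⟩
    show (sylv d k M).mulVecLin _ = 0
    rw [sylv_mulVecLin_eq_zero_iff M hdeg, hv']
    exact hv2

lemma finiteDimensional_PK {p q d k : ℕ} (M : Matrix (Fin p) (Fin q) F[X])
    (hdeg : ∀ i j, (M i j).natDegree ≤ d) : FiniteDimensional F (PK M k) := by
  rw [← map_toPolyL_ker_sylv M hdeg]
  infer_instance

lemma finrank_PK_eq {p q d k : ℕ} (M : Matrix (Fin p) (Fin q) F[X])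
    (hdeg : ∀ i j, (M i j).natDegree ≤ d) :
    Module.finrank F (PK M k) = k * q - (sylv d k M).rank := by
  have h1 := LinearMap.finrank_range_add_finrank_ker (sylv d k M).mulVecLin
  rw [Module.finrank_fintype_fun_eq_card, Fintype.card_prod, Fintype.card_fin,
    Fintype.card_fin] at h1
  have h2 : Module.finrank F (PK M k)
      = Module.finrank F (LinearMap.ker (sylv d k M).mulVecLin) := by
    rw [← map_toPolyL_ker_sylv M hdeg]
    exact (LinearEquiv.finrank_eq
      (Submodule.equivMapOfInjective _ (toPolyL_injective k q) _)).symm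
  rw [h2]
  have : (sylv d k M).rank
      = Module.finrank F (LinearMap.range (sylv d k M).mulVecLin) := rfl
  omega

lemma mulVec_ratMat_algebraMap {p q : ℕ} (M : Matrix (Fin p) (Fin q) F[X])
    (u : Fin q → F[X]) :
    (ratMat M).mulVec (fun j => algebraMap F[X] (RatFunc F) (u j))
      = fun i => algebraMap F[X] (RatFunc F) ((M.mulVec u) i) := by
  funext i
  simp [Matrix.mulVec, dotProduct, ratMat, map_sum]

lemma algebraMap_mem_rightNullSpace_iff {p q : ℕ} (M : Matrix (Fin p) (Fin q) F[X])
    (u : Fin q → F[X]) :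
    (fun j => algebraMap F[X] (RatFunc F) (u j)) ∈ rightNullSpace M ↔ M.mulVec u = 0 := by
  rw [rightNullSpace, LinearMap.mem_ker, Matrix.mulVecLin_apply,
    mulVec_ratMat_algebraMap]
  constructor
  · intro h
    funext i
    have := congrFun h i
    simpa using RatFunc.algebraMap_injective F (by simpa using this)
  · intro h
    rw [h]
    funext i
    simp

lemma PK_zero {p q : ℕ} (M : Matrix (Fin p) (Fin q) F[X]) : PK M 0 = ⊥ := by
  refine le_antisymm (fun v hv => ?_) bot_le
  obtain ⟨h1, _⟩ := mem_PK.1 hv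
  have : v = 0 := by
    funext j
    have := mem_degreeLT.1 (h1 j)
    rw [show ((0 : ℕ) : WithBot ℕ) = 0 from rfl, Nat.WithBot.lt_zero_iff,
      degree_eq_bot] at this
    exact this
  simp [this]

lemma PK_mono {p q : ℕ} (M : Matrix (Fin p) (Fin q) F[X]) {k l : ℕ} (h : k ≤ l) :
    PK M k ≤ PK M l := by
  intro v hv
  obtain ⟨h1, h2⟩ := mem_PK.1 hv
  refine mem_PK.2 ⟨fun j => ?_, h2⟩
  exact mem_degreeLT.2 (lt_of_lt_of_le (mem_degreeLT.1 (h1 j)) (by exact_mod_cast h))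

/-- The map extracting the degree-`k` coefficients from an element of `PK M (k+1)`. -/
def topC {p q : ℕ} (M : Matrix (Fin p) (Fin q) F[X]) (k : ℕ) :
    PK M (k + 1) →ₗ[F] (Fin q → F) where
  toFun v := fun j => (v.1 j).coeff k
  map_add' v w := by funext j; simp
  map_smul' c v := by funext j; simp [Polynomial.coeff_smul]

lemma ker_topC {p q : ℕ} (M : Matrix (Fin p) (Fin q) F[X]) (k : ℕ) :
    LinearMap.ker (topC M k) = Submodule.comap (PK M (k + 1)).subtype (PK M k) := by
  ext v
  obtain ⟨h1, h2⟩ := mem_PK.1 v.2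
  simp only [LinearMap.mem_ker, Submodule.mem_comap, Submodule.coe_subtype, mem_PK]
  constructor
  · intro h
    refine ⟨fun j => ?_, h2⟩
    rw [mem_degreeLT, degree_lt_iff_coeff_zero]
    intro t ht
    rcases eq_or_lt_of_le ht with rfl | ht'
    · exact congrFun h j
    · refine coeff_eq_zero_of_degree_lt (lt_of_lt_of_le (mem_degreeLT.1 (h1 j)) ?_)
      exact_mod_cast ht'
  · intro h
    funext j
    show (v.1 j).coeff k = 0
    refine coeff_eq_zero_of_degree_lt (lt_of_lt_of_le (mem_degreeLT.1 (h.1 j)) ?_)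
    exact_mod_cast le_refl k

lemma mulVec_mul_left {p q : ℕ} (M : Matrix (Fin p) (Fin q) F[X]) (a : F[X])
    (v : Fin q → F[X]) :
    M.mulVec (fun j => a * v j) = fun i => a * (M.mulVec v) i := by
  funext i
  simp [Matrix.mulVec, dotProduct, Finset.mul_sum, mul_left_comm]

lemma range_topC_le {p q : ℕ} (M : Matrix (Fin p) (Fin q) F[X]) (k : ℕ) :
    LinearMap.range (topC M k) ≤ LinearMap.range (topC M (k + 1)) := by
  rintro _ ⟨v, rfl⟩
  obtain ⟨h1, h2⟩ := mem_PK.1 v.2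
  have hw : (fun j => X * v.1 j) ∈ PK M (k + 1 + 1) := by
    refine mem_PK.2 ⟨fun j => ?_, ?_⟩
    · rw [mem_degreeLT, degree_lt_iff_coeff_zero]
      intro t ht
      obtain ⟨t', rfl⟩ : ∃ t', t = t' + 1 := ⟨t - 1, by omega⟩
      rw [coeff_X_mul]
      refine coeff_eq_zero_of_degree_lt (lt_of_lt_of_le (mem_degreeLT.1 (h1 j)) ?_)
      exact_mod_cast by omega
    · rw [mulVec_mul_left, h2]
      funext i
      simp
  refine ⟨⟨_, hw⟩, ?_⟩
  funext j
  show (X * v.1 j).coeff (k + 1) = (v.1 j).coeff k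
  exact coeff_X_mul _ _

set_option synthInstance.maxHeartbeats 1000000 in
lemma finrank_range_topC {p q : ℕ} (M : Matrix (Fin p) (Fin q) F[X]) {d : ℕ}
    (hdeg : ∀ i j, (M i j).natDegree ≤ d) (k : ℕ) :
    Module.finrank F (LinearMap.range (topC M k)) + Module.finrank F (PK M k)
      = Module.finrank F (PK M (k + 1)) := by
  haveI := finiteDimensional_PK (k := k + 1) M hdeg
  have h1 := LinearMap.finrank_range_add_finrank_ker (topC M k)
  rw [ker_topC] at h1
  have h2 : Module.finrank F
      (Submodule.comap (PK M (k + 1)).subtype (PK M k)) = Module.finrank F (PK M k) :=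
    LinearEquiv.finrank_eq (Submodule.comapSubtypeEquivOfLe (PK_mono M (Nat.le_succ k)))
  omega

set_option synthInstance.maxHeartbeats 1000000
set_option maxHeartbeats 2000000

lemma linearIndependent_algebraMap_of_topCoeff {t q : ℕ}
    (u : Fin t → (Fin q → F[X])) (D : Fin t → ℕ)
    (hdeg : ∀ i j, (u i j).natDegree ≤ D i)
    (hτ : LinearIndependent F (fun i (j : Fin q) => (u i j).coeff (D i))) :
    LinearIndependent (RatFunc F)
      (fun i (j : Fin q) => algebraMap F[X] (RatFunc F) (u i j)) := by
  classical
  rw [Fintype.linearIndependent_iff]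
  intro g hg
  obtain ⟨b, hb⟩ := IsLocalization.exist_integer_multiples
    (nonZeroDivisors F[X]) Finset.univ g
  have hb' : ∀ i, ∃ pi : F[X],
      algebraMap F[X] (RatFunc F) pi = (b : F[X]) • g i :=
    fun i => hb i (Finset.mem_univ i)
  choose p hp using hb'
  have hbne : algebraMap F[X] (RatFunc F) (b : F[X]) ≠ 0 := fun h =>
    nonZeroDivisors.coe_ne_zero b (RatFunc.algebraMap_injective F (by simpa using h))
  have hrel : ∀ j, ∑ i, p i * u i j = 0 := by
    intro j
    apply RatFunc.algebraMap_injective F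
    rw [map_sum, map_zero]
    have h1 := congrFun hg j
    simp only [Finset.sum_apply, Pi.smul_apply, smul_eq_mul, Pi.zero_apply] at h1
    calc ∑ i, algebraMap F[X] (RatFunc F) (p i * u i j)
        = ∑ i, ((b : F[X]) • g i) * algebraMap F[X] (RatFunc F) (u i j) := by
          refine Finset.sum_congr rfl fun i _ => ?_
          rw [_root_.map_mul, hp]
      _ = algebraMap F[X] (RatFunc F) (b : F[X])
            * ∑ i, g i * algebraMap F[X] (RatFunc F) (u i j) := by
          rw [Finset.mul_sum]
          refine Finset.sum_congr rfl fun i _ => ?_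
          rw [Algebra.smul_def]
          ring
      _ = 0 := by rw [h1, mul_zero]
  have hp0 : ∀ i, p i = 0 := by
    by_contra hne
    push_neg at hne
    obtain ⟨i₀, hi₀⟩ := hne
    set S := Finset.univ.filter (fun i => p i ≠ 0) with hS
    have hSne : S.Nonempty := ⟨i₀, Finset.mem_filter.2 ⟨Finset.mem_univ _, hi₀⟩⟩
    obtain ⟨iM, hiM, hsup⟩ :=
      Finset.exists_mem_eq_sup S hSne (fun i => (p i).natDegree + D i)
    set s := S.sup (fun i => (p i).natDegree + D i) with hs
    have hterm : ∀ i j, (p i * u i j).coeff s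
        = (p i).coeff (s - D i) * (u i j).coeff (D i) := by
      intro i j
      by_cases hpi : p i = 0
      · simp [hpi]
      · have hle : (p i).natDegree + D i ≤ s := by
          rw [hs]
          exact Finset.le_sup (f := fun i => (p i).natDegree + D i)
            (Finset.mem_filter.2 ⟨Finset.mem_univ _, hpi⟩)
        have hginv : s = (s - D i) + D i := by omega
        rw [hginv, coeff_mul_add_eq_of_natDegree_le (by omega) (hdeg i j)]
        simp
    have hcoeff : ∀ j, ∑ i, (p i).coeff (s - D i) • (u i j).coeff (D i) = 0 := by
      intro j
      have h0 := congrArg (fun pol : F[X] => pol.coeff s) (hrel j)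
      simp only [finset_sum_coeff, coeff_zero] at h0
      rw [← h0]
      exact Finset.sum_congr rfl fun i _ => by rw [hterm i j, smul_eq_mul]
    have hsum0 : ∑ i, (p i).coeff (s - D i) • (fun j => (u i j).coeff (D i)) = 0 := by
      funext j
      simp only [Finset.sum_apply, Pi.smul_apply, Pi.zero_apply]
      exact hcoeff j
    have hzero := Fintype.linearIndependent_iff.1 hτ
      (fun i => (p i).coeff (s - D i)) hsum0 iM
    have hpiM : p iM ≠ 0 := by
      have := hiM
      rw [hS, Finset.mem_filter] at this
      exact this.2
    have hdM : s = (p iM).natDegree + D iM := hsup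
    have hlead : (p iM).coeff ((p iM).natDegree) = 0 := by
      have he : s - D iM = (p iM).natDegree := by omega
      rwa [he] at hzero
    exact hpiM (leadingCoeff_eq_zero.1 hlead)
  intro i
  have h1 : (b : F[X]) • g i = 0 := by rw [← hp i, hp0 i, map_zero]
  rw [Algebra.smul_def] at h1
  rcases mul_eq_zero.1 h1 with h | h
  · exact absurd h hbne
  · exact h

lemma sum_sub_le_finrank_PK {p q d : ℕ} (M : Matrix (Fin p) (Fin q) F[X])
    (hdeg : ∀ i j, (M i j).natDegree ≤ d) (k : ℕ) {t : ℕ}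
    (u : Fin t → (Fin q → F[X]))
    (hker : ∀ i, M.mulVec (u i) = 0)
    (hind : LinearIndependent (RatFunc F)
      (fun i (j : Fin q) => algebraMap F[X] (RatFunc F) (u i j)))
    (ε : Fin t → ℕ) (hε : ∀ i j, (u i j).natDegree ≤ ε i) :
    ∑ i, (k - ε i) ≤ Module.finrank F (PK M k) := by
  haveI := finiteDimensional_PK (k := k) M hdeg
  have hmem : ∀ (a : Σ i : Fin t, Fin (k - ε i)),
      (fun j => X ^ ((a.2 : ℕ)) * u a.1 j) ∈ PK M k := by
    rintro ⟨i, s⟩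
    refine mem_PK.2 ⟨fun j => ?_, ?_⟩
    · have hnd : (X ^ (s : ℕ) * u i j).natDegree < k := by
        have h1 : (X ^ (s : ℕ) * u i j).natDegree ≤ (s : ℕ) + ε i := by
          refine natDegree_mul_le.trans ?_
          have := hε i j
          simp only [natDegree_X_pow]
          omega
        have := s.2
        omega
      exact mem_degreeLT.2 (lt_of_le_of_lt degree_le_natDegree (by exact_mod_cast hnd))
    · rw [mulVec_mul_left, hker i]
      funext i'
      simp
  set fam : (Σ i : Fin t, Fin (k - ε i)) → PK M k :=
    fun a => ⟨fun j => X ^ ((a.2 : ℕ)) * u a.1 j, hmem a⟩ with hfamdef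
  have hfam : LinearIndependent F fam := by
    apply LinearIndependent.of_comp (PK M k).subtype
    rw [Fintype.linearIndependent_iff]
    intro c hc
    set pp : Fin t → F[X] :=
      fun i => ∑ s : Fin (k - ε i), C (c ⟨i, s⟩) * X ^ (s : ℕ) with hppdef
    have hrel : ∀ j, ∑ i, pp i * u i j = 0 := by
      intro j
      have h1 := congrFun hc j
      simp only [Function.comp_apply, Finset.sum_apply, Pi.smul_apply,
        Submodule.coe_subtype, Pi.zero_apply] at h1
      rw [← Finset.univ_sigma_univ, Finset.sum_sigma] at h1
      rw [← h1]
      refine Finset.sum_congr rfl fun i _ => ?_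
      rw [hppdef]
      rw [Finset.sum_mul]
      refine Finset.sum_congr rfl fun s _ => ?_
      show C (c ⟨i, s⟩) * X ^ (s : ℕ) * u i j
        = c ⟨i, s⟩ • ((fam ⟨i, s⟩ : Fin q → F[X]) j)
      rw [hfamdef]
      show C (c ⟨i, s⟩) * X ^ (s : ℕ) * u i j
        = c ⟨i, s⟩ • (X ^ (s : ℕ) * u i j)
      rw [smul_eq_C_mul, mul_assoc]
    have hpp0 : ∀ i, pp i = 0 := by
      have hsum : ∑ i, (algebraMap F[X] (RatFunc F) (pp i))
          • (fun j => algebraMap F[X] (RatFunc F) (u i j)) = 0 := by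
        funext j
        simp only [Finset.sum_apply, Pi.smul_apply, smul_eq_mul, Pi.zero_apply]
        rw [← map_zero (algebraMap F[X] (RatFunc F)), ← hrel j, map_sum]
        exact Finset.sum_congr rfl fun i _ => (map_mul _ _ _).symm
      intro i
      have := Fintype.linearIndependent_iff.1 hind
        (fun i => algebraMap F[X] (RatFunc F) (pp i)) hsum i
      exact RatFunc.algebraMap_injective F (by simpa using this)
    intro a
    have h2 := congrArg (fun pol : F[X] => pol.coeff (a.2 : ℕ)) (hpp0 a.1)
    simp only [coeff_zero] at h2
    rw [hppdef] at h2
    rw [coeff_sum_C_mul_X_pow, dif_pos a.2.2] at h2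
    simpa using h2
  have hcard := hfam.fintype_card_le_finrank
  rw [Fintype.card_sigma] at hcard
  simpa using hcard

lemma finrank_PK_full {m n d : ℕ} (M : Matrix (Fin m) (Fin (m + n)) F[X])
    (hdeg : ∀ i j, (M i j).natDegree ≤ d) (hfull : HasFullSylvesterRank d M) (k : ℕ) :
    Module.finrank F (PK M k) = k * n - d * m := by
  rcases Nat.eq_zero_or_pos k with rfl | hk
  · rw [PK_zero]
    simp
  · rw [finrank_PK_eq M hdeg, hfull k hk]
    have e1 : k * (m + n) = k * m + k * n := by ring
    have e2 : (k + d) * m = k * m + d * m := by ring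
    rw [e1, e2]
    omega

lemma rank_ratMat {m n d : ℕ} (hn : 0 < n) (M : Matrix (Fin m) (Fin (m + n)) F[X])
    (hdeg : ∀ i j, (M i j).natDegree ≤ d) (hfull : HasFullSylvesterRank d M) :
    (ratMat M).rank = m := by
  classical
  have hub : (ratMat M).rank ≤ m := le_trans (Matrix.rank_le_card_height _) (by simp)
  have hrn := LinearMap.finrank_range_add_finrank_ker (ratMat M).mulVecLin
  rw [Module.finrank_fintype_fun_eq_card, Fintype.card_fin] at hrn
  have hrankdef : (ratMat M).rank
      = Module.finrank (RatFunc F) (LinearMap.range (ratMat M).mulVecLin) := rfl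
  suffices h : Module.finrank (RatFunc F) (LinearMap.ker (ratMat M).mulVecLin) ≤ n by
    omega
  by_contra hlt
  push_neg at hlt
  set W := LinearMap.ker (ratMat M).mulVecLin with hW
  let bb := Module.finBasis (RatFunc F) W
  let emb : Fin (n + 1) → Fin (Module.finrank (RatFunc F) W) := fun i => ⟨i, by omega⟩
  have hinj : Function.Injective emb := fun a b h => by
    simpa [emb, Fin.ext_iff] using h
  set w : Fin (n + 1) → (Fin (m + n) → RatFunc F) :=
    fun i => ((bb (emb i) : W) : Fin (m + n) → RatFunc F) with hwdef
  have hw : LinearIndependent (RatFunc F) w := by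
    have h1 : LinearIndependent (RatFunc F)
        (fun i => ((bb i : W) : Fin (m + n) → RatFunc F)) :=
      bb.linearIndependent.map' W.subtype (Submodule.ker_subtype W)
    exact h1.comp emb hinj
  have hwker : ∀ i, w i ∈ W := fun i => (bb (emb i)).2
  have hden : ∀ i, ∃ (bi : nonZeroDivisors F[X]) (ui : Fin (m + n) → F[X]),
      (fun j => algebraMap F[X] (RatFunc F) (ui j)) = (bi : F[X]) • w i := by
    intro i
    obtain ⟨bi, hbi⟩ := IsLocalization.exist_integer_multiples
      (nonZeroDivisors F[X]) Finset.univ (w i)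
    have h2 : ∀ j, ∃ aj : F[X],
        algebraMap F[X] (RatFunc F) aj = (bi : F[X]) • (w i j) :=
      fun j => hbi j (Finset.mem_univ j)
    choose ui hui using h2
    exact ⟨bi, ui, funext fun j => by rw [hui]; rfl⟩
  choose bv uv huv using hden
  have hunits : ∀ i, IsUnit (algebraMap F[X] (RatFunc F) ((bv i : F[X]))) := by
    intro i
    refine isUnit_iff_ne_zero.2 (fun h => ?_)
    have hz : (bv i : F[X]) = 0 := RatFunc.algebraMap_injective F (by simpa using h)
    exact nonZeroDivisors.coe_ne_zero (bv i) hz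
  have hsc : LinearIndependent (RatFunc F)
      (fun i (j : Fin (m + n)) => algebraMap F[X] (RatFunc F) (uv i j)) := by
    have heq : (fun i (j : Fin (m + n)) => algebraMap F[X] (RatFunc F) (uv i j))
        = fun i => ((fun i => (hunits i).unit) • w) i := by
      funext i
      rw [huv i]
      show (bv i : F[X]) • w i = ((hunits i).unit : RatFunc F) • w i
      rw [IsUnit.unit_spec, algebraMap_smul]
    rw [heq]
    exact hw.units_smul _
  have hker : ∀ i, M.mulVec (uv i) = 0 := by
    intro i
    apply (algebraMap_mem_rightNullSpace_iff M (uv i)).1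
    show (fun j => algebraMap F[X] (RatFunc F) (uv i j)) ∈ LinearMap.ker (ratMat M).mulVecLin
    rw [huv i, ← algebraMap_smul (RatFunc F) ((bv i : F[X])) (w i)]
    exact Submodule.smul_mem W _ (hwker i)
  set E := Finset.univ.sup (fun i => Finset.univ.sup fun j => (uv i j).natDegree) with hE
  have hEle : ∀ i j, (uv i j).natDegree ≤ E := by
    intro i j
    refine le_trans (Finset.le_sup (f := fun j => (uv i j).natDegree) (Finset.mem_univ j)) ?_
    exact Finset.le_sup (f := fun i => Finset.univ.sup fun j => (uv i j).natDegree)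
      (Finset.mem_univ i)
  set K0 := d * m + 1 + n * E with hK0
  have hkey := sum_sub_le_finrank_PK M hdeg (E + K0) uv hker hsc (fun _ => E) hEle
  rw [finrank_PK_full M hdeg hfull] at hkey
  have hsum : ∑ _i : Fin (n + 1), ((E + K0) - E) = (n + 1) * K0 := by
    rw [Finset.sum_const]
    simp [Nat.add_sub_cancel_left, mul_comm]
  rw [hsum] at hkey
  have hd1 : d * m ≤ (E + K0) * n := by
    calc d * m ≤ K0 := by
          have e : K0 = d * m + (1 + n * E) := by rw [hK0]; ring
          rw [e]
          exact Nat.le_add_right _ _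
      _ ≤ K0 * n := Nat.le_mul_of_pos_right _ hn
      _ ≤ (E + K0) * n := Nat.mul_le_mul_right _ (Nat.le_add_left _ _)
  have h2 := Nat.add_le_of_le_sub hd1 hkey
  have h3 : K0 * n + (K0 + d * m) ≤ K0 * n + E * n := by
    calc K0 * n + (K0 + d * m) = (n + 1) * K0 + d * m := by ring
      _ ≤ (E + K0) * n := h2
      _ = K0 * n + E * n := by ring
  have h4 : K0 + d * m ≤ E * n := le_of_add_le_add_left h3
  have h5 : E * n + 1 ≤ K0 := by
    rw [hK0]
    calc E * n + 1 ≤ E * n + (d * m + 1) :=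
          Nat.add_le_add_left (Nat.le_add_left 1 (d * m)) _
      _ = d * m + 1 + n * E := by ring
  have h6 : K0 < K0 :=
    lt_of_le_of_lt (le_trans (Nat.le_add_right K0 (d * m)) h4) (Nat.lt_of_succ_le h5)
  exact lt_irrefl _ h6

lemma finrank_rightNullSpace {m n d : ℕ} (hn : 0 < n)
    (M : Matrix (Fin m) (Fin (m + n)) F[X])
    (hdeg : ∀ i j, (M i j).natDegree ≤ d) (hfull : HasFullSylvesterRank d M) :
    Module.finrank (RatFunc F) (rightNullSpace M) = n := by
  have h1 := LinearMap.finrank_range_add_finrank_ker (ratMat M).mulVecLin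
  rw [Module.finrank_fintype_fun_eq_card, Fintype.card_fin] at h1
  have h2 : (ratMat M).rank = m := rank_ratMat hn M hdeg hfull
  have h3 : (ratMat M).rank
      = Module.finrank (RatFunc F) (LinearMap.range (ratMat M).mulVecLin) := rfl
  rw [rightNullSpace]
  omega

lemma exists_adapted {V : Type*} [AddCommGroup V] [Module F V]
    (W₁ W₂ : Submodule F V) (hle : W₁ ≤ W₂) [FiniteDimensional F W₂]
    {s t : ℕ} (h1 : Module.finrank F W₁ = s) (h2 : Module.finrank F W₂ = t)
    (hst : s ≤ t) :
    ∃ τ : Fin t → V, LinearIndependent F τ ∧ (∀ i, τ i ∈ W₂) ∧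
      ∀ i : Fin t, (i : ℕ) < s → τ i ∈ W₁ := by
  haveI : FiniteDimensional F W₁ := Submodule.finiteDimensional_of_le hle
  have key : ∀ j, s ≤ j → j ≤ t → ∃ v : Fin j → W₂,
      LinearIndependent F v ∧ ∀ i : Fin j, (i : ℕ) < s → (v i : V) ∈ W₁ := by
    intro j hj1 hj2
    induction j, hj1 using Nat.le_induction with
    | base =>
      let b := Module.finBasisOfFinrankEq F W₁ h1
      refine ⟨fun i => ⟨(b i : V), hle (b i).2⟩, ?_, fun i _ => (b i).2⟩
      apply LinearIndependent.of_comp W₂.subtype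
      exact b.linearIndependent.map' W₁.subtype (Submodule.ker_subtype W₁)
    | succ j hj ih =>
      obtain ⟨v, hv, hvW⟩ := ih (by omega)
      have hlt : Module.finrank F (Submodule.span F (Set.range v))
          < Module.finrank F W₂ := by
        rw [finrank_span_eq_card hv, Fintype.card_fin, h2]
        omega
      have hne : Submodule.span F (Set.range v) ≠ ⊤ := by
        intro h
        rw [h, finrank_top] at hlt
        omega
      obtain ⟨x, hx⟩ : ∃ x : W₂, x ∉ Submodule.span F (Set.range v) := by
        by_contra hc
        push_neg at hc
        exact hne (eq_top_iff.2 fun y _ => hc y)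
      refine ⟨Fin.snoc v x, linearIndependent_fin_snoc.2 ⟨hv, hx⟩, ?_⟩
      intro i hi
      have hi' : (i : ℕ) < j := by omega
      have he : i = Fin.castSucc ⟨(i : ℕ), hi'⟩ := by
        ext
        simp
      rw [he, Fin.snoc_castSucc]
      exact hvW _ (by simpa using hi)
  obtain ⟨v, hv, hvW⟩ := key t hst le_rfl
  exact ⟨fun i => (v i : V), hv.map' W₂.subtype (Submodule.ker_subtype W₂),
    fun i => (v i).2, fun i hi => hvW i hi⟩

lemma natDegree_le_of_mem_degreeLT {p : F[X]} {c : ℕ} (h : p ∈ degreeLT F (c + 1)) :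
    p.natDegree ≤ c := by
  rcases eq_or_ne p 0 with rfl | hp
  · simp
  have h1 := mem_degreeLT.1 h
  rw [degree_eq_natDegree hp] at h1
  have h2 : p.natDegree < c + 1 := by exact_mod_cast h1
  omega

lemma exists_dual_small {m n d : ℕ} (hn : 0 < n)
    (M : Matrix (Fin m) (Fin (m + n)) F[X])
    (hdeg : ∀ i j, (M i j).natDegree ≤ d) (hfull : HasFullSylvesterRank d M) :
    ∃ N' : Matrix (Fin n) (Fin (m + n)) F[X],
      LinearIndependent (RatFunc F) (ratRow N') ∧ rowSpan N' = rightNullSpace M ∧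
        ∑ i, rowDeg N' i ≤ d * m := by
  classical
  set q0 := d * m / n with hq0
  have e0 : n * q0 + d * m % n = d * m := Nat.div_add_mod (d * m) n
  have e0' : q0 * n = n * q0 := by ring
  have e1 : d * m % n < n := Nat.mod_lt _ hn
  have hdmle : d * m ≤ (q0 + 1) * n := by
    have : (q0 + 1) * n = q0 * n + n := by ring
    omega
  have hq0le : q0 * n ≤ d * m := by omega
  set s' := (q0 + 1) * n - d * m with hs'
  have hsle : s' ≤ n := by
    have h2 : (q0 + 1) * n = q0 * n + n := by ring
    omega
  have hfr1 : Module.finrank F (PK M q0) = 0 := by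
    rw [finrank_PK_full M hdeg hfull]
    omega
  have hfr2 : Module.finrank F (PK M (q0 + 1)) = s' := by
    rw [finrank_PK_full M hdeg hfull]
  have hfr3 : Module.finrank F (PK M (q0 + 2)) = s' + n := by
    rw [finrank_PK_full M hdeg hfull]
    have h2 : (q0 + 2) * n = (q0 + 1) * n + n := by ring
    omega
  have hW1 : Module.finrank F (LinearMap.range (topC M q0)) = s' := by
    have := finrank_range_topC M hdeg q0
    rw [hfr1, hfr2] at this
    omega
  have hW2 : Module.finrank F (LinearMap.range (topC M (q0 + 1))) = n := by
    have := finrank_range_topC M hdeg (q0 + 1)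
    rw [hfr2, hfr3] at this
    omega
  obtain ⟨τ, hτind, hτ2, hτ1⟩ := exists_adapted
    (LinearMap.range (topC M q0)) (LinearMap.range (topC M (q0 + 1)))
    (range_topC_le M q0) hW1 hW2 hsle
  set D : Fin n → ℕ := fun i => if (i : ℕ) < s' then q0 else q0 + 1 with hD
  have hch : ∀ i : Fin n, ∃ u : Fin (m + n) → F[X],
      M.mulVec u = 0 ∧ (∀ j, (u j).natDegree ≤ D i) ∧
        (∀ j, (u j).coeff (D i) = τ i j) := by
    intro i
    by_cases h : (i : ℕ) < s'
    · obtain ⟨v, hv⟩ := hτ1 i h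
      refine ⟨v.1, (mem_PK.1 v.2).2, fun j => ?_, fun j => ?_⟩
      · rw [hD]
        simp only [if_pos h]
        exact natDegree_le_of_mem_degreeLT ((mem_PK.1 v.2).1 j)
      · rw [hD]
        simp only [if_pos h]
        exact congrFun hv j
    · obtain ⟨v, hv⟩ := hτ2 i
      refine ⟨v.1, (mem_PK.1 v.2).2, fun j => ?_, fun j => ?_⟩
      · rw [hD]
        simp only [if_neg h]
        exact natDegree_le_of_mem_degreeLT ((mem_PK.1 v.2).1 j)
      · rw [hD]
        simp only [if_neg h]
        exact congrFun hv j
  choose u hu0 hu1 hu2 using hch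
  have hind : LinearIndependent (RatFunc F)
      (fun i (j : Fin (m + n)) => algebraMap F[X] (RatFunc F) (u i j)) := by
    apply linearIndependent_algebraMap_of_topCoeff u D hu1
    have he : (fun i (j : Fin (m + n)) => (u i j).coeff (D i)) = τ := by
      funext i j
      exact hu2 i j
    rw [he]
    exact hτind
  refine ⟨Matrix.of u, hind, ?_, ?_⟩
  · have hle : rowSpan (Matrix.of u) ≤ rightNullSpace M := by
      rw [rowSpan, Submodule.span_le]
      rintro _ ⟨i, rfl⟩
      exact (algebraMap_mem_rightNullSpace_iff M (u i)).2 (hu0 i)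
    haveI : FiniteDimensional (RatFunc F) (rightNullSpace M) := by
      rw [rightNullSpace]
      infer_instance
    refine Submodule.eq_of_le_of_finrank_le hle ?_
    rw [finrank_rightNullSpace hn M hdeg hfull]
    have : Module.finrank (RatFunc F) (rowSpan (Matrix.of u)) = n := by
      rw [rowSpan, show ratRow (Matrix.of u)
        = (fun i (j : Fin (m + n)) => algebraMap F[X] (RatFunc F) (u i j)) from rfl,
        finrank_span_eq_card hind, Fintype.card_fin]
    omega
  · have hrow : ∀ i, rowDeg (Matrix.of u) i ≤ D i := by
      intro i
      exact Finset.sup_le fun j _ => hu1 i j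
    refine le_trans (Finset.sum_le_sum fun i _ => hrow i) ?_
    have hDval : ∀ i : Fin n, D i = q0 + (if (i : ℕ) < s' then 0 else 1) := by
      intro i
      rw [hD]
      by_cases h : (i : ℕ) < s' <;> simp [h]
    calc ∑ i : Fin n, D i
        = ∑ i : Fin n, (q0 + (if (i : ℕ) < s' then 0 else 1)) :=
          Finset.sum_congr rfl fun i _ => hDval i
      _ = n * q0 + ∑ i : Fin n, (if (i : ℕ) < s' then 0 else 1) := by
          rw [Finset.sum_add_distrib, Finset.sum_const, Finset.card_univ,
            Fintype.card_fin, smul_eq_mul]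
      _ = n * q0 + (n - s') := by
          congr 1
          rw [Fin.sum_univ_eq_sum_range (fun i => if i < s' then 0 else 1) n]
          rw [Finset.range_eq_Ico,
            ← Finset.sum_Ico_consecutive _ (Nat.zero_le s') hsle]
          have hz : ∑ i ∈ Finset.Ico 0 s', (if i < s' then 0 else (1 : ℕ)) = 0 :=
            Finset.sum_eq_zero fun i hi => if_pos (Finset.mem_Ico.1 hi).2
          have ho : ∑ i ∈ Finset.Ico s' n, (if i < s' then 0 else (1 : ℕ)) = n - s' := by
            rw [Finset.sum_congr rfl
              (fun i hi => if_neg (not_lt.2 (Finset.mem_Ico.1 hi).1)),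
              Finset.sum_const, Nat.card_Ico, smul_eq_mul, mul_one]
          rw [hz, ho, zero_add]
      _ ≤ d * m := by
          have h2 : (q0 + 1) * n = q0 * n + n := by ring
          have h3 : n * q0 = q0 * n := by ring
          omega

/-- If `M(λ)` has full-Sylvester-rank, then the degree of any minimal basis dual to
`M(λ)` equals `k' = ⌈md/n⌉`; equivalently, the maximum right minimal index of `M(λ)`
equals `k'`. -/
theorem degree_dualMinimalBasis_of_hasFullSylvesterRank {F : Type*} [Field F]
    {m n d : ℕ} (hm : 0 < m) (hn : 0 < n) (hd : 0 < d)
    (M : Matrix (Fin m) (Fin (m + n)) F[X]) (hdeg : ∀ i j, (M i j).natDegree ≤ d)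
    (hfull : HasFullSylvesterRank d M)
    (k' : ℕ) (hk' : k' = ⌈(m * d : ℚ) / (n : ℚ)⌉₊) :
    (∀ N : Matrix (Fin n) (Fin (m + n)) F[X],
        IsMinimalBasis N → M * Nᵀ = 0 →
        Finset.univ.sup (fun i => rowDeg N i) = k') ∧
    (∀ N : Matrix (Fin n) (Fin (m + n)) F[X],
        IsMinimalBasisOf (rightNullSpace M) N →
        Finset.univ.sup (fun i => rowDeg N i) = k') := by
  classical
  have hnQ : (0 : ℚ) < (n : ℚ) := by exact_mod_cast hn
  have hxpos : (0 : ℚ) < (m * d : ℚ) / (n : ℚ) := by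
    apply div_pos _ hnQ
    exact_mod_cast Nat.mul_pos hm hd
  have hkpos : 1 ≤ k' := by
    rw [hk']
    exact Nat.ceil_pos.2 hxpos
  have hc1 : d * m ≤ k' * n := by
    have h := Nat.le_ceil ((m * d : ℚ) / (n : ℚ))
    rw [← hk', div_le_iff₀ hnQ] at h
    have h2 : (d * m : ℚ) ≤ (k' * n : ℚ) := by push_cast at h ⊢; linarith
    exact_mod_cast h2
  have hc2 : k' * n < d * m + n := by
    have h := Nat.ceil_lt_add_one (le_of_lt hxpos)
    rw [← hk'] at h
    have h2 : (k' : ℚ) * n < ((m * d : ℚ) / n + 1) * n :=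
      mul_lt_mul_of_pos_right h hnQ
    rw [add_mul, div_mul_cancel₀ _ (ne_of_gt hnQ), one_mul] at h2
    have h3 : (k' * n : ℚ) < (d * m + n : ℚ) := by push_cast at h2 ⊢; linarith
    exact_mod_cast h3
  obtain ⟨k0, rfl⟩ : ∃ k0, k' = k0 + 1 := ⟨k' - 1, by omega⟩
  haveI : Nonempty (Fin n) := ⟨⟨0, hn⟩⟩
  have e1 : n * (k0 + 1) = (k0 + 1) * n := by ring
  have e2 : n * k0 + n = (k0 + 1) * n := by ring
  have main2 : ∀ N : Matrix (Fin n) (Fin (m + n)) F[X],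
      IsMinimalBasisOf (rightNullSpace M) N →
      Finset.univ.sup (fun i => rowDeg N i) = k0 + 1 := by
    intro N hN
    obtain ⟨hind, hsp, hmin⟩ := hN
    have hker : ∀ i, M.mulVec (fun j => N i j) = 0 := by
      intro i
      apply (algebraMap_mem_rightNullSpace_iff M _).1
      have h1 : ratRow N i ∈ rowSpan N := Submodule.subset_span ⟨i, rfl⟩
      rw [hsp] at h1
      exact h1
    have hindu : LinearIndependent (RatFunc F)
        (fun i (j : Fin (m + n)) => algebraMap F[X] (RatFunc F) (N i j)) := hind
    have hkey := sum_sub_le_finrank_PK M hdeg (k0 + 1) (fun i j => N i j) hker hindu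
      (fun i => rowDeg N i) (fun i j => Finset.le_sup (f := fun j => (N i j).natDegree) (Finset.mem_univ j))
    rw [finrank_PK_full M hdeg hfull] at hkey
    have hkey2 := Nat.add_le_of_le_sub hc1 hkey
    clear hkey
    obtain ⟨N', hN'ind, hN'sp, hN'sum⟩ := exists_dual_small hn M hdeg hfull
    have hSig : ∑ i, rowDeg N i ≤ d * m := le_trans (hmin N' hN'ind hN'sp) hN'sum
    set ε : Fin n → ℕ := fun i => rowDeg N i with hεdef
    have hEta : Finset.univ.sum ε = ∑ i : Fin n, ε i := rfl
    have hid : ∑ i, (min (ε i) (k0 + 1)) + ∑ i, ((k0 + 1) - ε i) = n * (k0 + 1) := by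
      rw [← Finset.sum_add_distrib]
      calc ∑ i, (min (ε i) (k0 + 1) + ((k0 + 1) - ε i))
          = ∑ _i : Fin n, (k0 + 1) := Finset.sum_congr rfl fun i _ => by omega
        _ = n * (k0 + 1) := by
            rw [Finset.sum_const, Finset.card_univ, Fintype.card_fin, smul_eq_mul]
    have hKle : Finset.univ.sup ε ≤ k0 + 1 := by
      by_contra hgt
      push_neg at hgt
      obtain ⟨i₀, _, hi₀⟩ := Finset.exists_mem_eq_sup Finset.univ Finset.univ_nonempty ε
      have hbig : k0 + 2 ≤ ε i₀ := by omega
      have hsplitm : ∑ i ∈ Finset.univ.erase i₀, min (ε i) (k0 + 1)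
          + min (ε i₀) (k0 + 1) = ∑ i, min (ε i) (k0 + 1) :=
        Finset.sum_erase_add _ _ (Finset.mem_univ i₀)
      have hsplite : ∑ i ∈ Finset.univ.erase i₀, ε i + ε i₀ = ∑ i, ε i :=
        Finset.sum_erase_add _ _ (Finset.mem_univ i₀)
      have hmono : ∑ i ∈ Finset.univ.erase i₀, min (ε i) (k0 + 1)
          ≤ ∑ i ∈ Finset.univ.erase i₀, ε i :=
        Finset.sum_le_sum fun i _ => min_le_left _ _
      have hminval : min (ε i₀) (k0 + 1) = k0 + 1 := by omega
      have hfe : ∑ i, ((k0 + 1) - rowDeg N i) = ∑ i, ((k0 + 1) - ε i) := rfl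
      omega
    have hKge : k0 + 1 ≤ Finset.univ.sup ε := by
      by_contra hlt
      push_neg at hlt
      have hall : ∀ i, ε i ≤ k0 := fun i =>
        le_trans (Finset.le_sup (Finset.mem_univ i)) (by omega)
      have hmineq : ∑ i, min (ε i) (k0 + 1) = ∑ i, ε i :=
        Finset.sum_congr rfl fun i _ => by have := hall i; omega
      have hcap : ∑ i, ε i ≤ ∑ _i : Fin n, k0 := Finset.sum_le_sum fun i _ => hall i
      rw [Finset.sum_const, Finset.card_univ, Fintype.card_fin, smul_eq_mul] at hcap
      have hfe : ∑ i, ((k0 + 1) - rowDeg N i) = ∑ i, ((k0 + 1) - ε i) := rfl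
      omega
    omega
  refine ⟨?_, main2⟩
  intro N hNmb hMN
  have hrows : ∀ i, ratRow N i ∈ rightNullSpace M := by
    intro i
    show (ratMat M).mulVecLin (ratRow N i) = 0
    funext i'
    have h0 : (M * Nᵀ) i' i = 0 := by rw [hMN]; rfl
    show ((ratMat M).mulVec (ratRow N i)) i' = 0
    have h1 : ((ratMat M).mulVec (ratRow N i)) i'
        = algebraMap F[X] (RatFunc F) ((M * Nᵀ) i' i) := by
      rw [Matrix.mul_apply]
      simp [Matrix.mulVec, dotProduct, ratMat, ratRow, map_sum, Matrix.transpose_apply]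
    rw [h1, h0, map_zero]
  obtain ⟨hind, hsp0, hmin⟩ := hNmb
  have hle : rowSpan N ≤ rightNullSpace M := by
    rw [rowSpan, Submodule.span_le]
    rintro _ ⟨i, rfl⟩
    exact hrows i
  haveI : FiniteDimensional (RatFunc F) (rightNullSpace M) := by
    rw [rightNullSpace]
    infer_instance
  have hEq : rowSpan N = rightNullSpace M := by
    refine Submodule.eq_of_le_of_finrank_le hle ?_
    rw [finrank_rightNullSpace hn M hdeg hfull]
    have h2 : Module.finrank (RatFunc F) (rowSpan N) = n := by
      rw [rowSpan, finrank_span_eq_card hind, Fintype.card_fin]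
    omega
  refine main2 N ⟨hind, hEq, ?_⟩
  intro M' h1 h2
  exact hmin M' h1 (by rw [h2, hEq])

end
end
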